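/- arXiv:1812.06442 — 6 statements merged into one kernel-verified Lean document; each statement's English description precedes it below -/
import Mathlib

section
/- Let f be holomorphic on the disk D(0,r) ⊂ ℂ and g holomorphic on D(0,s), with Taylor coefficients aₙ and bₙ at 0. For any ρ with 0 < ρ < r and any z with |z| < ρ·s, one has Σₙ aₙ bₙ zⁿ = (1/(2πi)) ∮_{|ζ|=ρ} f(ζ) g(z/ζ) dζ/ζ, where the integral is over the positively oriented circle of radius ρ. -/
open Complex Metric
open scoped NNReal ENNReal
set_option maxHeartbeats 1000000

/-- Cauchy integral representation of the Hadamard product: if `f` is holomorphic on `D(0,r)`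
and `g` is holomorphic on `D(0,s)`, with Taylor coefficients `a n = f⁽ⁿ⁾(0)/n!` and
`b n = g⁽ⁿ⁾(0)/n!`, then for `0 < ρ < r` and `|z| < ρ * s`,
`∑ aₙ bₙ zⁿ = (1/(2πi)) ∮_{|ζ|=ρ} f ζ * g (z/ζ) dζ/ζ`. -/
theorem stmt_1 (r s : ℝ) (hr : 0 < r) (hs : 0 < s) (f g : ℂ → ℂ)
    (hf : DifferentiableOn ℂ f (ball (0 : ℂ) r))
    (hg : DifferentiableOn ℂ g (ball (0 : ℂ) s))
    (a b : ℕ → ℂ)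
    (ha : ∀ n, a n = iteratedDeriv n f 0 / n.factorial)
    (hb : ∀ n, b n = iteratedDeriv n g 0 / n.factorial)
    (ρ : ℝ) (hρ : 0 < ρ) (hρr : ρ < r)
    (z : ℂ) (hz : ‖z‖ < ρ * s) :
    ∑' n : ℕ, a n * b n * z ^ n =
      (1 / (2 * Real.pi * Complex.I)) *
        ∮ ζ in C(0, ρ), f ζ * g (z / ζ) / ζ := by
  have h2πI : (2 * (Real.pi : ℂ) * I) ≠ 0 := by
    simp [Real.pi_ne_zero, I_ne_zero]
  have hzρ : ‖z‖ / ρ < s := (div_lt_iff₀ hρ).2 (by linarith [hz])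
  have habs0 : (0:ℝ) ≤ ‖z‖ / ρ := div_nonneg (norm_nonneg z) hρ.le
  set t : ℝ := (‖z‖ / ρ + s) / 2 with ht_def
  have hzt : ‖z‖ / ρ < t := by rw [ht_def]; linarith
  have hts : t < s := by rw [ht_def]; linarith
  have ht0 : (0:ℝ) < t := lt_of_le_of_lt habs0 hzt
  have hρcoe : ((ρ.toNNReal : ℝ≥0) : ℝ) = ρ := Real.coe_toNNReal ρ hρ.le
  have htcoe : ((t.toNNReal : ℝ≥0) : ℝ) = t := Real.coe_toNNReal t ht0.le
  -- power series for f and g via Cauchy integrals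
  have hp : HasFPowerSeriesOnBall f (cauchyPowerSeries f 0 ρ) 0 (ENNReal.ofNNReal ρ.toNNReal) := by
    have h0 := DifferentiableOn.hasFPowerSeriesOnBall (R := ρ.toNNReal)
      (hf.mono (by rw [hρcoe]; exact closedBall_subset_ball hρr))
      (by simp [Real.toNNReal_pos, hρ])
    rwa [hρcoe] at h0
  have hq : HasFPowerSeriesOnBall g (cauchyPowerSeries g 0 t) 0 (ENNReal.ofNNReal t.toNNReal) := by
    have h0 := DifferentiableOn.hasFPowerSeriesOnBall (R := t.toNNReal)
      (hg.mono (by rw [htcoe]; exact closedBall_subset_ball hts))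
      (by simp [Real.toNNReal_pos, ht0])
    rwa [htcoe] at h0
  -- Taylor coefficients
  have hA : ∀ n, (cauchyPowerSeries f 0 ρ).coeff n = a n := by
    intro n
    have h1 := hp.factorial_smul (y := (1:ℂ)) n
    rw [← iteratedDeriv_eq_iteratedFDeriv] at h1
    rw [ha n, ← h1]
    have h2 : ((cauchyPowerSeries f 0 ρ) n fun _ => (1:ℂ)) =
        (cauchyPowerSeries f 0 ρ).coeff n := by
      rw [FormalMultilinearSeries.apply_eq_pow_smul_coeff, one_pow, one_smul]
    rw [h2, nsmul_eq_mul, mul_comm, mul_div_assoc,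
      div_self (show ((n.factorial : ℂ)) ≠ 0 by exact_mod_cast n.factorial_ne_zero), mul_one]
  have hB : ∀ n, (cauchyPowerSeries g 0 t).coeff n = b n := by
    intro n
    have h1 := hq.factorial_smul (y := (1:ℂ)) n
    rw [← iteratedDeriv_eq_iteratedFDeriv] at h1
    rw [hb n, ← h1]
    have h2 : ((cauchyPowerSeries g 0 t) n fun _ => (1:ℂ)) =
        (cauchyPowerSeries g 0 t).coeff n := by
      rw [FormalMultilinearSeries.apply_eq_pow_smul_coeff, one_pow, one_smul]
    rw [h2, nsmul_eq_mul, mul_comm, mul_div_assoc,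
      div_self (show ((n.factorial : ℂ)) ≠ 0 by exact_mod_cast n.factorial_ne_zero), mul_one]
  -- continuity facts
  have hcm_ne : ∀ θ : ℝ, circleMap 0 ρ θ ≠ 0 := fun θ => circleMap_ne_center hρ.ne'
  have habs_cm : ∀ θ : ℝ, ‖circleMap 0 ρ θ‖ = ρ := fun θ => by
    rw [norm_circleMap_zero, abs_of_pos hρ]
  have hfc : Continuous fun θ : ℝ => f (circleMap 0 ρ θ) := by
    refine hf.continuousOn.comp_continuous (continuous_circleMap 0 ρ) fun θ => ?_
    rw [mem_ball_zero_iff, habs_cm θ]; exact hρr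
  have habs_div : ∀ θ : ℝ, ‖z / circleMap 0 ρ θ‖ = ‖z‖ / ρ := fun θ => by
    rw [norm_div, habs_cm θ]
  have hgc : Continuous fun θ : ℝ => g (z / circleMap 0 ρ θ) := by
    refine hg.continuousOn.comp_continuous
      (continuous_const.div (continuous_circleMap 0 ρ) hcm_ne) fun θ => ?_
    rw [mem_ball_zero_iff, habs_div θ]
    exact lt_trans hzt hts
  -- summability of the coefficient bound
  have hrad : (ENNReal.ofNNReal (‖z‖ / ρ).toNNReal) <
      (cauchyPowerSeries g 0 t).radius := by
    refine lt_of_lt_of_le ?_ hq.r_le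
    exact_mod_cast ENNReal.coe_lt_coe.2 ((Real.toNNReal_lt_toNNReal_iff ht0).2 hzt)
  have hsummable : Summable fun n : ℕ => ‖b n‖ * (‖z‖ / ρ) ^ n := by
    have h0 := (cauchyPowerSeries g 0 t).summable_norm_mul_pow hrad
    refine h0.congr fun n => ?_
    rw [FormalMultilinearSeries.norm_apply_eq_norm_coef, hB n,
      Real.coe_toNNReal _ habs0]
  -- main HasSum via dominated convergence
  have hmain : HasSum
      (fun n : ℕ => ∮ ζ in C(0, ρ), (b n * z ^ n) * (ζ⁻¹ ^ n * (ζ⁻¹ * f ζ)))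
      (∮ ζ in C(0, ρ), f ζ * g (z / ζ) / ζ) := by
    simp only [circleIntegral, deriv_circleMap, smul_eq_mul]
    refine intervalIntegral.hasSum_integral_of_dominated_convergence
      (fun n θ => ‖f (circleMap 0 ρ θ)‖ * (‖b n‖ * (‖z‖ / ρ) ^ n))
      (fun n => ?_) (fun n => ?_) ?_ ?_ ?_
    · refine Continuous.aestronglyMeasurable ?_
      exact ((continuous_circleMap 0 ρ).mul continuous_const).mul
        (continuous_const.mul ((((continuous_circleMap 0 ρ).inv₀ hcm_ne).pow n).mul
          (((continuous_circleMap 0 ρ).inv₀ hcm_ne).mul hfc)))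
    · refine Filter.Eventually.of_forall fun θ => fun _ => le_of_eq ?_
      simp only [norm_mul, norm_pow, norm_inv, Complex.norm_I,
        habs_cm θ, mul_one]
      rw [div_pow]
      field_simp
      have hρn : ρ ^ n * ρ⁻¹ ^ n = 1 := by rw [← mul_pow, mul_inv_cancel₀ hρ.ne', one_pow]
      linear_combination (‖b n‖ * ‖z‖ ^ n * ‖f (circleMap 0 ρ θ)‖) * hρn
    · exact Filter.Eventually.of_forall fun θ _ => by
        simpa [mul_assoc] using hsummable.mul_left ‖f (circleMap 0 ρ θ)‖
    · have h0 : (fun θ : ℝ => ∑' n : ℕ, ‖f (circleMap 0 ρ θ)‖ *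
          (‖b n‖ * (‖z‖ / ρ) ^ n)) =
          fun θ => ‖f (circleMap 0 ρ θ)‖ * ∑' n : ℕ, ‖b n‖ * (‖z‖ / ρ) ^ n := by
        funext θ; exact tsum_mul_left
      rw [h0]
      exact (hfc.norm.mul continuous_const).intervalIntegrable 0 (2 * Real.pi)
    · refine Filter.Eventually.of_forall fun θ _ => ?_
      have hw : z / circleMap 0 ρ θ ∈ Metric.eball (0:ℂ) (ENNReal.ofNNReal t.toNNReal) := by
        rw [Metric.emetric_ball_nnreal, mem_ball_zero_iff, habs_div θ,
          htcoe]
        exact hzt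
      have hgs := hq.hasSum hw
      have hK := hgs.mul_left
        (circleMap 0 ρ θ * I * ((circleMap 0 ρ θ)⁻¹ * f (circleMap 0 ρ θ)))
      convert hK using 1
      · rfl
      · funext n
        rw [FormalMultilinearSeries.apply_eq_pow_smul_coeff, hB n, smul_eq_mul, div_pow]
        field_simp
        ring
      · rw [zero_add]
        field_simp
  -- evaluate each term
  have hterm : (fun n : ℕ => ∮ ζ in C(0, ρ), (b n * z ^ n) * (ζ⁻¹ ^ n * (ζ⁻¹ * f ζ))) =
      fun n : ℕ => (2 * (Real.pi : ℂ) * I) * (a n * b n * z ^ n) := by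
    funext n
    have h1 : ((cauchyPowerSeries f 0 ρ) n fun _ => (1:ℂ)) =
        (2 * (Real.pi : ℂ) * I)⁻¹ • ∮ ζ in C(0, ρ), (1 / (ζ - 0)) ^ n • (ζ - 0)⁻¹ • f ζ :=
      cauchyPowerSeries_apply f 0 ρ n 1
    have h2 : ((cauchyPowerSeries f 0 ρ) n fun _ => (1:ℂ)) = a n := by
      rw [← hA n, FormalMultilinearSeries.apply_eq_pow_smul_coeff, one_pow, one_smul]
    simp only [sub_zero, one_div, smul_eq_mul] at h1
    have h3 : (∮ ζ in C(0, ρ), ζ⁻¹ ^ n * (ζ⁻¹ * f ζ)) = (2 * (Real.pi : ℂ) * I) * a n := by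
      rw [← h2, h1]
      field_simp
    rw [circleIntegral.integral_const_mul, h3]
    ring
  rw [hterm] at hmain
  have hfinal := hmain.mul_left (2 * (Real.pi : ℂ) * I)⁻¹
  have heq : (fun n : ℕ => (2 * (Real.pi : ℂ) * I)⁻¹ *
      ((2 * (Real.pi : ℂ) * I) * (a n * b n * z ^ n))) = fun n => a n * b n * z ^ n := by
    funext n
    rw [← mul_assoc, inv_mul_cancel₀ h2πI, one_mul]
  rw [heq] at hfinal
  rw [hfinal.tsum_eq, one_div]
end

section
/- Let S₁, S₂ be proper convolvable closed subsets of ℂ* with S₁·S₂ ≠ ℂ*, let U be a relatively compact open subset of ℂ*, and let V be an open neighbourhood of S₁·S₂ in ℂ*. Then there exists a compact neighbourhood W of 1 in ℂ* such that (W²·S₁·S₂) ∩ closure(U) ⊆ V. -/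
open scoped Pointwise
open Topology

instance : LocallyCompactSpace ℂˣ := by
  have h : IsOpenEmbedding (Units.val : ℂˣ → ℂ) := by
    refine ⟨Units.isEmbedding_val₀, ?_⟩
    have : Set.range (Units.val : ℂˣ → ℂ) = {(0:ℂ)}ᶜ := by
      ext x
      constructor
      · rintro ⟨u, rfl⟩; exact u.ne_zero
      · intro h; exact ⟨Units.mk0 x h, rfl⟩
    rw [this]; exact isOpen_compl_singleton
  exact h.locallyCompactSpace

theorem aux_closed_mul (S₁ S₂ : Set ℂˣ) (hS₁ : IsClosed S₁) (hS₂ : IsClosed S₂)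
    (hconv : ∀ K : Set ℂˣ, IsCompact K → IsCompact (S₁ ∩ (K * S₂⁻¹))) :
    IsClosed (S₁ * S₂) := by
  rw [← closure_subset_iff_isClosed]
  intro x hx
  obtain ⟨K, hKn, hKc⟩ : ∃ K ∈ 𝓝 x, IsCompact K := by
    obtain ⟨K, hK1, hK2⟩ := exists_compact_mem_nhds x
    exact ⟨K, hK2, hK1⟩
  set L := S₁ ∩ (K * S₂⁻¹) with hL
  have hLc : IsCompact L := hconv K hKc
  have hLS : IsClosed (L * S₂) := hS₂.mul_left_of_isCompact hLc
  have hsub : S₁ * S₂ ∩ interior K ⊆ L * S₂ := by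
    rintro p ⟨⟨s₁, hs₁, s₂, hs₂, rfl⟩, hpK⟩
    refine ⟨s₁, ⟨hs₁, ?_⟩, s₂, hs₂, rfl⟩
    have : s₁ * s₂ * s₂⁻¹ ∈ K * S₂⁻¹ :=
      Set.mul_mem_mul (interior_subset hpK) (Set.inv_mem_inv.mpr hs₂)
    simpa using this
  have hx1 : x ∈ closure (S₁ * S₂ ∩ interior K) := by
    rw [mem_closure_iff_nhds] at hx ⊢
    intro N hN
    obtain ⟨y, hyN, hyS⟩ := hx (N ∩ interior K)
      (Filter.inter_mem hN (isOpen_interior.mem_nhds (mem_interior_iff_mem_nhds.mpr hKn)))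
    exact ⟨y, hyN.1, hyS, hyN.2⟩
  have hx2 : x ∈ L * S₂ := by
    rw [← hLS.closure_eq]
    exact closure_mono hsub hx1
  exact Set.mul_subset_mul_right Set.inter_subset_left hx2

/-- Let `S₁, S₂` be proper convolvable closed subsets of `ℂ* = ℂˣ` with `S₁·S₂ ≠ ℂ*`, let `U`
be a relatively compact open subset and `V` an open neighbourhood of `S₁·S₂`. Then there is a
compact neighbourhood `W` of `1` such that `(W²·S₁·S₂) ∩ closure U ⊆ V`. -/
theorem stmt_8 (S₁ S₂ : Set ℂˣ) (hS₁ : IsClosed S₁) (hS₂ : IsClosed S₂)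
    (hS₁p : S₁ ≠ Set.univ) (hS₂p : S₂ ≠ Set.univ)
    (hconv : ∀ K : Set ℂˣ, IsCompact K → IsCompact (S₁ ∩ (K * S₂⁻¹)))
    (hprod : S₁ * S₂ ≠ Set.univ)
    (U : Set ℂˣ) (hU : IsOpen U) (hUc : IsCompact (closure U))
    (V : Set ℂˣ) (hV : IsOpen V) (hSV : S₁ * S₂ ⊆ V) :
    ∃ W : Set ℂˣ, IsCompact W ∧ W ∈ nhds (1 : ℂˣ) ∧
      ((W * W) * (S₁ * S₂)) ∩ closure U ⊆ V := by
  have hP : IsClosed (S₁ * S₂) := aux_closed_mul S₁ S₂ hS₁ hS₂ hconv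
  set C := closure U ∩ Vᶜ with hC
  have hCc : IsCompact C := hUc.inter_right hV.isClosed_compl
  set D := C * (S₁ * S₂)⁻¹ with hD
  have hDclosed : IsClosed D := hP.inv.mul_left_of_isCompact hCc
  have h1D : (1 : ℂˣ) ∉ D := by
    rintro ⟨c, hc, b, hb, hcb⟩
    have hcb' : c = b⁻¹ := eq_inv_of_mul_eq_one_left hcb
    rw [Set.mem_inv] at hb
    exact hc.2 (hSV (hcb' ▸ hb))
  have hDc : Dᶜ ∈ 𝓝 (1 : ℂˣ) := hDclosed.isOpen_compl.mem_nhds h1D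
  obtain ⟨O, hOopen, hO1, hOO⟩ := exists_open_nhds_one_mul_subset hDc
  obtain ⟨W, hWn, hWO, hWc⟩ := local_compact_nhds (hOopen.mem_nhds hO1)
  refine ⟨W, hWc, hWn, ?_⟩
  rintro x ⟨⟨w, hw, p, hp, rfl⟩, hxU⟩
  by_contra hxV
  have hwD : w ∈ D := ⟨w * p, ⟨hxU, hxV⟩, p⁻¹, Set.inv_mem_inv.mpr hp, by group⟩
  obtain ⟨a, ha, b, hb, rfl⟩ := hw
  exact hOO (Set.mul_mem_mul (hWO ha) (hWO hb)) hwD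
end

section
/- Let f₁ be continuous on ℂ* and compactly supported, let f₂ : ℂ* → ℂ be continuous, and define f(z) = ∫_{ℂ*} f₁(ζ) f₂(z/ζ) dA(ζ) (integral with respect to Lebesgue measure on ℂ). If f₂ is holomorphic on ℂ* \ S₂ for some closed S₂, then f is holomorphic on every open set U ⊆ ℂ* such that (supp f₁)·S₂ is disjoint from U. -/
open scoped Pointwise
open MeasureTheory Metric Set

private lemma aesm_of_supp {K : Set ℂ} (hK : IsCompact K) (g : ℂ → ℂ)
    (hg : ContinuousOn g K) (h0 : ∀ ζ ∉ K, g ζ = 0) :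
    AEStronglyMeasurable g (volume : Measure ℂ) := by
  have : g = K.indicator g := by
    ext ζ
    by_cases h : ζ ∈ K
    · simp [Set.indicator_of_mem h]
    · simp [Set.indicator_of_notMem h, h0 ζ h]
  rw [this]
  exact (aestronglyMeasurable_indicator_iff hK.measurableSet).mpr
    (hg.aestronglyMeasurable hK.measurableSet)

/-- Let `f₁` be continuous on `ℂ* = ℂ \ {0}` with compact support contained in `ℂ*`, and let
`f₂` be continuous on `ℂ*` and holomorphic on `ℂ* \ S₂` for a closed subset `S₂` of `ℂ*`.
Then `z ↦ ∫_{ℂ} f₁(ζ) f₂(z/ζ) dA(ζ)` is holomorphic on every open `U ⊆ ℂ*` disjoint from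
`(supp f₁)·S₂`. -/
theorem stmt_10 (f₁ f₂ : ℂ → ℂ) (S₂ : Set ℂ) (hS₂0 : S₂ ⊆ {(0 : ℂ)}ᶜ)
    (hS₂ : IsClosed (Subtype.val ⁻¹' S₂ : Set {z : ℂ // z ≠ 0}))
    (hf₁ : ContinuousOn f₁ {(0 : ℂ)}ᶜ)
    (hf₁supp : IsCompact (tsupport f₁)) (hf₁supp0 : tsupport f₁ ⊆ {(0 : ℂ)}ᶜ)
    (hf₂c : ContinuousOn f₂ {(0 : ℂ)}ᶜ)
    (hf₂ : DifferentiableOn ℂ f₂ ({(0 : ℂ)}ᶜ \ S₂))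
    (U : Set ℂ) (hU : IsOpen U) (hU0 : U ⊆ {(0 : ℂ)}ᶜ)
    (hdisj : (tsupport f₁ * S₂) ∩ U = ∅) :
    DifferentiableOn ℂ (fun z : ℂ => ∫ ζ : ℂ, f₁ ζ * f₂ (z / ζ)) U := by
  set K := tsupport f₁ with hKdef
  set V : Set ℂ := {(0 : ℂ)}ᶜ \ S₂ with hVdef
  -- V is open
  obtain ⟨C, hCclosed, hCeq⟩ := isClosed_induced_iff.mp hS₂
  have hmem_iff : ∀ z : ℂ, z ≠ 0 → (z ∈ C ↔ z ∈ S₂) := by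
    intro z hz
    exact Set.ext_iff.mp hCeq ⟨z, hz⟩
  have hVeq : V = {(0 : ℂ)}ᶜ \ C := by
    ext z
    simp only [hVdef, Set.mem_diff, Set.mem_compl_iff, Set.mem_singleton_iff]
    constructor
    · rintro ⟨hz, hzS⟩; exact ⟨hz, fun hc => hzS ((hmem_iff z hz).mp hc)⟩
    · rintro ⟨hz, hzC⟩; exact ⟨hz, fun hs => hzC ((hmem_iff z hz).mpr hs)⟩
  have hVopen : IsOpen V := by
    rw [hVeq]; exact isOpen_compl_singleton.sdiff hCclosed
  -- key geometric fact
  have hdiv : ∀ z ∈ U, ∀ ζ ∈ K, z / ζ ∈ V := by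
    intro z hz ζ hζ
    have hζ0 : ζ ≠ 0 := hf₁supp0 hζ
    have hz0 : z ≠ 0 := hU0 hz
    refine ⟨div_ne_zero hz0 hζ0, fun hmem => ?_⟩
    have h1 : ζ * (z / ζ) ∈ tsupport f₁ * S₂ := Set.mul_mem_mul hζ hmem
    rw [mul_div_cancel₀ z hζ0] at h1
    have : z ∈ (tsupport f₁ * S₂) ∩ U := ⟨h1, hz⟩
    rw [hdisj] at this
    exact this
  -- f₁ is continuous on all of ℂ
  have hf₁cont : Continuous f₁ := by
    rw [continuous_iff_continuousAt]
    intro x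
    by_cases hx : x ∈ K
    · exact hf₁.continuousAt (isOpen_compl_singleton.mem_nhds (hf₁supp0 hx))
    · have hev : f₁ =ᶠ[nhds x] (fun _ => (0 : ℂ)) := by
        filter_upwards [(isClosed_tsupport f₁).isOpen_compl.mem_nhds hx] with y hy
        exact image_eq_zero_of_notMem_tsupport hy
      exact (continuousAt_congr hev).mpr continuousAt_const
  -- deriv f₂ is continuous on V
  have hderivcont : ContinuousOn (deriv f₂) V :=
    ((hf₂.analyticOnNhd hVopen).deriv).continuousOn
  intro z₀ hz₀
  obtain ⟨ε, hε, hball⟩ := Metric.isOpen_iff.mp hU z₀ hz₀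
  set δ := ε / 2 with hδdef
  have hδ : 0 < δ := by positivity
  have hδε : δ < ε := by rw [hδdef]; linarith
  have hcbU : closedBall z₀ δ ⊆ U := fun x hx =>
    hball (mem_ball.mpr (lt_of_le_of_lt (mem_closedBall.mp hx) hδε))
  -- compact set of quotients
  set T : Set ℂ := (fun p : ℂ × ℂ => p.1 / p.2) '' (closedBall z₀ δ ×ˢ K) with hTdef
  have hTcomp : IsCompact T := by
    refine ((isCompact_closedBall z₀ δ).prod hf₁supp).image_of_continuousOn ?_
    exact continuousOn_fst.div continuousOn_snd (fun p hp => hf₁supp0 hp.2)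
  have hTV : T ⊆ V := by
    rintro w ⟨⟨x, ζ⟩, ⟨hx, hζ⟩, rfl⟩
    exact hdiv x (hcbU hx) ζ hζ
  obtain ⟨C₁, hC₁⟩ := hTcomp.exists_bound_of_continuousOn (hderivcont.mono hTV)
  have hinvcont : ContinuousOn (fun ζ : ℂ => ζ⁻¹) K :=
    continuousOn_id.inv₀ (fun ζ hζ => hf₁supp0 hζ)
  obtain ⟨C₂, hC₂⟩ := hf₁supp.exists_bound_of_continuousOn hinvcont
  set D := max C₁ 0 with hDdef
  set E := max C₂ 0 with hEdef
  have hD0 : 0 ≤ D := le_max_right _ _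
  have hE0 : 0 ≤ E := le_max_right _ _
  set F' : ℂ → ℂ → ℂ := fun x ζ => f₁ ζ * (deriv f₂ (x / ζ) * ζ⁻¹) with hF'def
  have key := hasDerivAt_integral_of_dominated_loc_of_deriv_le (μ := volume)
    (F := fun x ζ => f₁ ζ * f₂ (x / ζ)) (F' := F')
    (x₀ := z₀) (bound := fun ζ => ‖f₁ ζ‖ * (D * E)) (Metric.ball_mem_nhds z₀ hδ)
    ?_ ?_ ?_ ?_ ?_ ?_
  · exact key.2.differentiableAt.differentiableWithinAt
  · -- measurability of F x for x near z₀
    filter_upwards [hU.mem_nhds hz₀] with x hx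
    refine aesm_of_supp hf₁supp _ ?_ ?_
    · refine (hf₁.mono hf₁supp0).mul ?_
      refine hf₂c.comp (continuousOn_const.div continuousOn_id
        (fun ζ hζ => hf₁supp0 hζ)) ?_
      intro ζ hζ
      exact (hdiv x hx ζ hζ).1
    · intro ζ hζ
      rw [image_eq_zero_of_notMem_tsupport hζ, zero_mul]
  · -- integrability of F z₀
    have hsupp : Function.support (fun ζ => f₁ ζ * f₂ (z₀ / ζ)) ⊆ K := by
      intro ζ hζ
      by_contra h
      exact hζ (show f₁ ζ * f₂ (z₀ / ζ) = 0 by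
        rw [image_eq_zero_of_notMem_tsupport h, zero_mul])
    rw [← integrableOn_iff_integrable_of_support_subset hsupp]
    refine ContinuousOn.integrableOn_compact hf₁supp ?_
    refine (hf₁.mono hf₁supp0).mul ?_
    refine hf₂c.comp (continuousOn_const.div continuousOn_id
      (fun ζ hζ => hf₁supp0 hζ)) ?_
    intro ζ hζ
    exact (hdiv z₀ hz₀ ζ hζ).1
  · -- measurability of F' z₀
    refine aesm_of_supp hf₁supp _ ?_ ?_
    · refine (hf₁.mono hf₁supp0).mul (ContinuousOn.mul ?_ hinvcont)
      refine hderivcont.comp (continuousOn_const.div continuousOn_id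
        (fun ζ hζ => hf₁supp0 hζ)) ?_
      intro ζ hζ
      exact hdiv z₀ hz₀ ζ hζ
    · intro ζ hζ
      rw [hF'def]
      simp [image_eq_zero_of_notMem_tsupport hζ]
  · -- bound
    refine Filter.Eventually.of_forall (fun ζ => fun x hx => ?_)
    by_cases hζ : ζ ∈ K
    · have hxT : x / ζ ∈ T := ⟨(x, ζ), ⟨ball_subset_closedBall hx, hζ⟩, rfl⟩
      have h1 : ‖deriv f₂ (x / ζ)‖ ≤ D := le_trans (hC₁ _ hxT) (le_max_left _ _)
      have h2 : ‖ζ⁻¹‖ ≤ E := le_trans (hC₂ ζ hζ) (le_max_left _ _)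
      rw [hF'def]
      simp only [norm_mul]
      exact mul_le_mul_of_nonneg_left
        (mul_le_mul h1 h2 (norm_nonneg _) hD0) (norm_nonneg _)
    · rw [hF'def]
      simp only [image_eq_zero_of_notMem_tsupport hζ, zero_mul, norm_zero, norm_mul]
      positivity
  · -- integrability of bound
    exact ((hf₁cont.integrable_of_hasCompactSupport hf₁supp).norm).mul_const (D * E)
  · -- differentiability
    refine Filter.Eventually.of_forall (fun ζ => fun x hx => ?_)
    by_cases hζ : ζ ∈ K
    · have hxU : x ∈ U := hball (mem_ball.mpr (lt_trans (mem_ball.mp hx) hδε))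
      have hv : x / ζ ∈ V := hdiv x hxU ζ hζ
      have hd : DifferentiableAt ℂ f₂ (x / ζ) :=
        (hf₂.differentiableAt (hVopen.mem_nhds hv))
      have h1 : HasDerivAt f₂ (deriv f₂ (x / ζ)) (x / ζ) := hd.hasDerivAt
      have h2 : HasDerivAt (fun y : ℂ => y / ζ) ζ⁻¹ x := by
        simpa [one_div] using (hasDerivAt_id x).div_const ζ
      have h3 := (h1.comp x h2).const_mul (f₁ ζ)
      simpa [hF'def, Function.comp] using h3
    · have h0 : f₁ ζ = 0 := image_eq_zero_of_notMem_tsupport hζ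
      rw [hF'def]
      simp only [h0, zero_mul]
      exact hasDerivAt_const x 0
end

section
/- Let S₁ = {(2m)! : m ∈ ℕ} ⊆ ℂ* and S₂ = {1/(2n+1)! : n ∈ ℕ} ⊆ ℂ*. Then S₁ and S₂ are closed in ℂ* and are convolvable (S₁ ∩ K·S₂⁻¹ is compact for every compact K ⊆ ℂ*), but the closures of S₁ and S₂ in the Riemann sphere are not star-eligible, i.e. (closure S₁ × closure S₂) ∩ {(0,∞),(∞,0)} ≠ ∅. -/
open scoped Pointwise
open OnePoint Filter Topology

private lemma aux_fact_norm_tendsto :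
    Tendsto (fun m : ℕ => ‖((2 * m).factorial : ℂ)‖) atTop atTop := by
  have h1 : Tendsto (fun m : ℕ => ((2 * m).factorial : ℕ)) atTop atTop := by
    apply tendsto_atTop_atTop.2
    intro b
    exact ⟨b, fun a ha => le_trans (le_trans ha (Nat.le_mul_of_pos_left a two_pos))
      (Nat.self_le_factorial _)⟩
  have h2 := tendsto_natCast_atTop_atTop (R := ℝ) |>.comp h1
  simpa [Function.comp_def, Complex.norm_natCast] using h2

private lemma aux_inv_fact_tendsto :
    Tendsto (fun n : ℕ => (((2 * n + 1).factorial : ℂ))⁻¹) atTop (𝓝 0) := by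
  have h1 : Tendsto (fun n : ℕ => ‖((2 * n + 1).factorial : ℂ)‖) atTop atTop := by
    have h0 : Tendsto (fun n : ℕ => ((2 * n + 1).factorial : ℕ)) atTop atTop := by
      apply tendsto_atTop_atTop.2
      intro b
      exact ⟨b, fun a ha => le_trans (le_trans ha (by omega)) (Nat.self_le_factorial _)⟩
    have h2 := tendsto_natCast_atTop_atTop (R := ℝ) |>.comp h0
    simpa [Function.comp_def, Complex.norm_natCast] using h2
  have h3 : Tendsto (fun n : ℕ => ((2 * n + 1).factorial : ℂ)) atTop (Bornology.cobounded ℂ) :=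
    tendsto_norm_atTop_iff_cobounded.1 h1
  exact tendsto_inv₀_cobounded.comp h3

/-- The sets `S₁ = {(2m)! : m ∈ ℕ}` and `S₂ = {1/(2n+1)! : n ∈ ℕ}` are closed subsets of
`ℂ* = ℂ \ {0}` and are convolvable (`S₁ ∩ K·S₂⁻¹` compact for every compact `K ⊆ ℂ*`),
but their closures in the Riemann sphere `ℙ¹ = OnePoint ℂ` are not star-eligible:
the product of the closures meets `{(0,∞), (∞,0)}`. -/
theorem stmt_11 (S₁ S₂ : Set ℂ)
    (hS₁def : S₁ = {z : ℂ | ∃ m : ℕ, z = ((2 * m).factorial : ℂ)})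
    (hS₂def : S₂ = {z : ℂ | ∃ n : ℕ, z = (((2 * n + 1).factorial : ℂ))⁻¹}) :
    IsClosed (Subtype.val ⁻¹' S₁ : Set {z : ℂ // z ≠ 0}) ∧
    IsClosed (Subtype.val ⁻¹' S₂ : Set {z : ℂ // z ≠ 0}) ∧
    (∀ K : Set ℂ, IsCompact K → K ⊆ {(0 : ℂ)}ᶜ → IsCompact (S₁ ∩ (K * S₂⁻¹))) ∧
    ((closure ((fun z : ℂ => (z : OnePoint ℂ)) '' S₁) ×ˢ
        closure ((fun z : ℂ => (z : OnePoint ℂ)) '' S₂)) ∩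
      {p : OnePoint ℂ × OnePoint ℂ |
        p = (((0 : ℂ) : OnePoint ℂ), (∞ : OnePoint ℂ)) ∨
        p = ((∞ : OnePoint ℂ), ((0 : ℂ) : OnePoint ℂ))}).Nonempty := by
  -- S₁ is closed in ℂ
  have hS₁closed : IsClosed S₁ := by
    have himg : S₁ = (fun k : ℤ => (k : ℂ)) '' {k : ℤ | ∃ m : ℕ, k = ((2 * m).factorial : ℤ)} := by
      rw [hS₁def]
      ext z
      constructor
      · rintro ⟨m, rfl⟩
        exact ⟨((2 * m).factorial : ℤ), ⟨m, rfl⟩, by push_cast; ring⟩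
      · rintro ⟨k, ⟨m, rfl⟩, rfl⟩
        exact ⟨m, by push_cast; ring⟩
    rw [himg]
    exact Complex.closedEmbedding_intCast.isClosedMap _ (isClosed_discrete _)
  -- S₂ ∪ {0} is compact, hence closed in ℂ
  have hS₂ins : IsCompact (insert (0 : ℂ)
      (Set.range fun n : ℕ => (((2 * n + 1).factorial : ℂ))⁻¹)) :=
    aux_inv_fact_tendsto.isCompact_insert_range
  have hS₂eq : S₂ = Set.range fun n : ℕ => (((2 * n + 1).factorial : ℂ))⁻¹ := by
    rw [hS₂def]; ext z; simp [eq_comm]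
  refine ⟨hS₁closed.preimage continuous_subtype_val, ?_, ?_, ?_⟩
  · -- S₂ closed in ℂ*
    have : (Subtype.val ⁻¹' S₂ : Set {z : ℂ // z ≠ 0}) =
        Subtype.val ⁻¹' (insert (0 : ℂ)
          (Set.range fun n : ℕ => (((2 * n + 1).factorial : ℂ))⁻¹)) := by
      ext ⟨z, hz⟩
      simp [hS₂eq, hz]
    rw [this]
    exact (hS₂ins.isClosed).preimage continuous_subtype_val
  · -- convolvability
    intro K hK hK0
    rcases K.eq_empty_or_nonempty with rfl | hne
    · rw [Set.empty_mul, Set.inter_empty]; exact isCompact_empty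
    obtain ⟨k₀, hk₀K, hk₀min⟩ := hK.exists_isMinOn hne continuous_norm.continuousOn
    set a : ℝ := ‖k₀‖ with ha
    have hk₀0 : k₀ ≠ 0 := hK0 hk₀K
    have ha0 : 0 < a := norm_pos_iff.2 hk₀0
    obtain ⟨b, hb⟩ := hK.isBounded.exists_norm_le
    set N : ℕ := ⌈b⌉₊ with hN
    set M : ℕ := max ⌈b * ((2 * N + 1).factorial : ℝ)⌉₊ ⌈a⁻¹⌉₊ with hM
    have hsub : S₁ ∩ (K * S₂⁻¹) ⊆
        (fun m : ℕ => ((2 * m).factorial : ℂ)) '' Set.Iic M := by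
      rintro z ⟨hz1, hz2⟩
      rw [hS₁def] at hz1
      obtain ⟨m, rfl⟩ := hz1
      obtain ⟨k, hkK, w, hw, hkw⟩ := hz2
      rw [Set.mem_inv, hS₂eq] at hw
      obtain ⟨n, hn⟩ := hw
      have hwval : w = ((2 * n + 1).factorial : ℂ) := by
        simpa using (congrArg Inv.inv hn).symm
      subst hwval
      -- k = (2m)! / (2n+1)!
      have hfacn : (((2 * n + 1).factorial : ℂ)) ≠ 0 :=
        Nat.cast_ne_zero.2 (Nat.factorial_ne_zero _)
      have hkval : k = ((2 * m).factorial : ℂ) / ((2 * n + 1).factorial : ℂ) := by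
        field_simp
        linear_combination hkw
      have hnormk : ‖k‖ = ((2 * m).factorial : ℝ) / ((2 * n + 1).factorial : ℝ) := by
        rw [hkval, norm_div]
        norm_num [Complex.norm_natCast]
      have hFpos : (0 : ℝ) < ((2 * n + 1).factorial : ℝ) := by
        exact_mod_cast (2 * n + 1).factorial_pos
      have hGpos : (0 : ℝ) < ((2 * m).factorial : ℝ) := by
        exact_mod_cast (2 * m).factorial_pos
      have hlow : a * ((2 * n + 1).factorial : ℝ) ≤ ((2 * m).factorial : ℝ) := by
        have h2 : a ≤ ‖k‖ := hk₀min hkK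
        rw [hnormk] at h2
        exact (le_div_iff₀ hFpos).1 h2
      have hhigh : ((2 * m).factorial : ℝ) ≤ b * ((2 * n + 1).factorial : ℝ) := by
        have h2 : ((2 * m).factorial : ℝ) / ((2 * n + 1).factorial : ℝ) ≤ b := by
          rw [← hnormk]; exact hb k hkK
        exact (div_le_iff₀ hFpos).1 h2
      refine ⟨m, ?_, rfl⟩
      rcases le_or_gt m n with hmn | hnm
      · -- case m ≤ n : everything small
        have hfac : (2 * n + 1) * (2 * m).factorial ≤ (2 * n + 1).factorial := by
          have h1 : (2 * n + 1).factorial = (2 * n + 1) * (2 * n).factorial := by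
            rw [show 2 * n + 1 = (2 * n) + 1 from rfl, Nat.factorial_succ]
          rw [h1]
          exact Nat.mul_le_mul_left _ (Nat.factorial_le (by omega))
        have hfacR : ((2 * n + 1 : ℕ) : ℝ) * ((2 * m).factorial : ℝ) ≤
            ((2 * n + 1).factorial : ℝ) := by exact_mod_cast hfac
        have key : a * ((2 * n + 1 : ℕ) : ℝ) ≤ 1 := by
          nlinarith [hlow, hfacR, hGpos, ha0]
        have hma : (m : ℝ) ≤ a⁻¹ := by
          rw [inv_eq_one_div, le_div_iff₀ ha0]
          have hmnR : (m : ℝ) ≤ (n : ℝ) := Nat.cast_le.2 hmn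
          push_cast at key
          nlinarith [key, hmnR, ha0]
        have : m ≤ ⌈a⁻¹⌉₊ := by
          exact_mod_cast hma.trans (Nat.le_ceil _)
        exact this.trans (le_max_right _ _)
      · -- case n < m : n is bounded by b
        have hb0 : (0 : ℝ) ≤ b := le_trans (norm_nonneg k) (hb k hkK)
        have hfac : (2 * n + 2) * (2 * n + 1).factorial ≤ (2 * m).factorial := by
          have h1 : (2 * n + 2).factorial = (2 * n + 2) * (2 * n + 1).factorial := by
            rw [show 2 * n + 2 = (2 * n + 1) + 1 from rfl, Nat.factorial_succ]
          rw [← h1]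
          exact Nat.factorial_le (by omega)
        have hfacR : ((2 * n + 2 : ℕ) : ℝ) * ((2 * n + 1).factorial : ℝ) ≤
            ((2 * m).factorial : ℝ) := by exact_mod_cast hfac
        have hnb : ((2 * n + 2 : ℕ) : ℝ) ≤ b := by
          nlinarith [hfacR, hhigh, hFpos]
        have hnN : n ≤ N := by
          have h1 : (n : ℝ) ≤ b := by push_cast at hnb; linarith
          exact_mod_cast h1.trans (Nat.le_ceil _)
        have hfle : ((2 * n + 1).factorial : ℝ) ≤ ((2 * N + 1).factorial : ℝ) := by
          exact_mod_cast Nat.factorial_le (by omega)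
        have hmm : ((2 * m : ℕ) : ℝ) ≤ ((2 * m).factorial : ℝ) := by
          exact_mod_cast Nat.self_le_factorial _
        have hmb : (m : ℝ) ≤ b * ((2 * N + 1).factorial : ℝ) := by
          have := mul_le_mul_of_nonneg_left hfle hb0
          push_cast at hmm
          nlinarith [hmm, hhigh, this]
        have : m ≤ ⌈b * ((2 * N + 1).factorial : ℝ)⌉₊ := by
          exact_mod_cast hmb.trans (Nat.le_ceil _)
        exact this.trans (le_max_left _ _)
    exact (((Set.finite_Iic M).image _).subset hsub).isCompact
  · -- the closures meet (∞, 0)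
    refine ⟨(∞, ((0 : ℂ) : OnePoint ℂ)), ⟨?_, ?_⟩, Or.inr rfl⟩
    · -- ∞ ∈ closure (coe '' S₁)
      have htend : Tendsto (fun m : ℕ => (((2 * m).factorial : ℂ) : OnePoint ℂ)) atTop (𝓝 ∞) := by
        apply OnePoint.tendsto_coe_infty.comp
        rw [Filter.coclosedCompact_eq_cocompact, ← Metric.cobounded_eq_cocompact]
        exact tendsto_norm_atTop_iff_cobounded.1 aux_fact_norm_tendsto
      exact mem_closure_of_tendsto htend (Eventually.of_forall fun m =>
        ⟨((2 * m).factorial : ℂ), by rw [hS₁def]; exact ⟨m, rfl⟩, rfl⟩)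
    · have htend : Tendsto (fun n : ℕ =>
          (fun z : ℂ => (z : OnePoint ℂ)) ((((2 * n + 1).factorial : ℂ))⁻¹)) atTop
          (𝓝 ((0 : ℂ) : OnePoint ℂ)) :=
        (OnePoint.continuous_coe.tendsto 0).comp aux_inv_fact_tendsto
      exact mem_closure_of_tendsto htend (Eventually.of_forall fun n =>
        ⟨(((2 * n + 1).factorial : ℂ))⁻¹, by rw [hS₂def]; exact ⟨n, rfl⟩, rfl⟩)
end

section
/- Let S₁ and S₂ be closed subsets of the Riemann sphere ℙ¹ = ℂ ∪ {∞} which are star-eligible, and suppose S₁ ∩ ℂ* and S₂ ∩ ℂ* are closed in ℂ*. If z ∈ ℂ* \ (S₁·S₂), then z·S₂⁻¹ is a closed subset of ℙ¹ \ S₁ and S₁ is a compact subset of ℙ¹ \ z·S₂⁻¹, where the multiplication and inversion are extended continuously to ℙ¹ as in the extended multiplication M = (ℙ¹×ℙ¹)\{(0,∞),(∞,0)}. -/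
open OnePoint

/-- The continuous extension of multiplication to the Riemann sphere `ℙ¹ = OnePoint ℂ`,
defined on `M = (ℙ¹ × ℙ¹) \ {(0,∞), (∞,0)}` (the value at the two excluded points is a
junk value `∞`). -/
noncomputable def pmul (x y : OnePoint ℂ) : OnePoint ℂ :=
  match x, y with
  | (a : ℂ), (b : ℂ) => ((a * b : ℂ) : OnePoint ℂ)
  | _, _ => ∞

/-- The continuous extension of inversion to the Riemann sphere, with `0⁻¹ = ∞` and
`∞⁻¹ = 0`. -/
noncomputable def pinv (x : OnePoint ℂ) : OnePoint ℂ :=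
  match x with
  | (a : ℂ) => if a = 0 then ∞ else ((a⁻¹ : ℂ) : OnePoint ℂ)
  | _ => ((0 : ℂ) : OnePoint ℂ)

open Filter Bornology Topology

lemma pmul_pinv_continuous (z : ℂ) (hz : z ≠ 0) :
    Continuous (fun w => pmul (z : OnePoint ℂ) (pinv w)) := by
  have hcc : coclosedCompact ℂ = cobounded ℂ := by
    rw [Filter.coclosedCompact_eq_cocompact, ← Metric.cobounded_eq_cocompact]
  rw [continuous_iff_continuousAt]
  intro w
  induction w using OnePoint.rec with
  | infty =>
    rw [OnePoint.continuousAt_infty']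
    have h0 : pmul (z : OnePoint ℂ) (pinv ∞) = ((0 : ℂ) : OnePoint ℂ) := by
      simp [pmul, pinv]
    rw [h0, hcc]
    have h1 : Tendsto (fun b : ℂ => ((z * b⁻¹ : ℂ) : OnePoint ℂ)) (cobounded ℂ)
        (𝓝 (((0 : ℂ) : OnePoint ℂ))) := by
      have := (tendsto_inv₀_cobounded (α := ℂ)).const_mul z
      rw [mul_zero] at this
      exact (OnePoint.continuous_coe.tendsto (0 : ℂ)).comp this
    refine h1.congr' ?_
    filter_upwards [eventually_ne_cobounded (0 : ℂ)] with b hb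
    simp [pmul, pinv, hb]
  | coe b =>
    rw [OnePoint.continuousAt_coe]
    by_cases hb : b = 0
    · subst hb
      have h0 : ((fun w => pmul (z : OnePoint ℂ) (pinv w)) ∘ (↑)) (0 : ℂ) = ∞ := by
        simp [pmul, pinv]
      rw [ContinuousAt, h0]
      rw [← nhdsNE_sup_pure (0 : ℂ)]
      refine Tendsto.sup ?_ ?_
      · have h2 : Tendsto (fun b : ℂ => z * b⁻¹) (𝓝[≠] (0 : ℂ)) (cobounded ℂ) :=
          (tendsto_mul_left_cobounded hz).comp tendsto_inv₀_nhdsNE_zero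
        have h3 : Tendsto ((↑) : ℂ → OnePoint ℂ) (cobounded ℂ) (𝓝 ∞) := by
          rw [← hcc]; exact OnePoint.tendsto_coe_infty
        refine (h3.comp h2).congr' ?_
        filter_upwards [self_mem_nhdsWithin] with b hb
        have hb' : b ≠ 0 := hb
        simp [pmul, pinv, Function.comp, hb']
      · rw [tendsto_pure_left]
        intro s hs
        rw [show ((fun w => pmul (z : OnePoint ℂ) (pinv w)) ∘ (↑)) (0 : ℂ) = ∞ from h0]
        exact mem_of_mem_nhds hs
    · have heq : ∀ᶠ c : ℂ in 𝓝 b,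
          ((fun w => pmul (z : OnePoint ℂ) (pinv w)) ∘ (↑)) c = ((z * c⁻¹ : ℂ) : OnePoint ℂ) := by
        filter_upwards [isOpen_compl_singleton.mem_nhds (by simpa using hb :
          b ∈ ({0}ᶜ : Set ℂ))] with c hc
        simp only [Set.mem_compl_iff, Set.mem_singleton_iff] at hc
        simp [pmul, pinv, hc]
      refine ContinuousAt.congr ?_ (Filter.EventuallyEq.symm heq)
      exact (OnePoint.continuous_coe.continuousAt).comp
        ((continuousAt_const.mul (continuousAt_inv₀ hb)))

/-- Let `S₁, S₂` be star-eligible closed subsets of `ℙ¹` whose traces on `ℂ*` are closed in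
`ℂ*`. For `z ∈ ℂ* \ S₁·S₂`, the set `z·S₂⁻¹` is a closed subset of `ℙ¹ \ S₁`, and `S₁` is a
compact subset of `ℙ¹ \ z·S₂⁻¹`. -/
theorem stmt_12 (S₁ S₂ : Set (OnePoint ℂ)) (hS₁ : IsClosed S₁) (hS₂ : IsClosed S₂)
    (hS₁p : S₁ ≠ Set.univ) (hS₂p : S₂ ≠ Set.univ)
    (hprodp : Set.image2 pmul S₁ S₂ ≠ Set.univ)
    (hM : ∀ p ∈ S₁ ×ˢ S₂,
      p ≠ (((0 : ℂ) : OnePoint ℂ), (∞ : OnePoint ℂ)) ∧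
      p ≠ ((∞ : OnePoint ℂ), ((0 : ℂ) : OnePoint ℂ)))
    (hS₁t : IsClosed ((fun z : {w : ℂ // w ≠ 0} => ((z : ℂ) : OnePoint ℂ)) ⁻¹' S₁))
    (hS₂t : IsClosed ((fun z : {w : ℂ // w ≠ 0} => ((z : ℂ) : OnePoint ℂ)) ⁻¹' S₂))
    (z : ℂ) (hz : z ≠ 0) (hzS : ((z : OnePoint ℂ)) ∉ Set.image2 pmul S₁ S₂) :
    (fun w => pmul (z : OnePoint ℂ) (pinv w)) '' S₂ ⊆ S₁ᶜ ∧
    IsClosed (Subtype.val ⁻¹' ((fun w => pmul (z : OnePoint ℂ) (pinv w)) '' S₂) :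
      Set ↥(S₁ᶜ)) ∧
    IsCompact S₁ ∧
    S₁ ⊆ ((fun w => pmul (z : OnePoint ℂ) (pinv w)) '' S₂)ᶜ := by
  have hsub : (fun w => pmul (z : OnePoint ℂ) (pinv w)) '' S₂ ⊆ S₁ᶜ := by
    rintro x ⟨w, hw, rfl⟩ hx
    -- hx : pmul z (pinv w) ∈ S₁
    induction w using OnePoint.rec with
    | infty =>
      -- pinv ∞ = 0, so pmul z (pinv ∞) = 0 ∈ S₁, with ∞ ∈ S₂: contradicts hM
      have h0 : pmul (z : OnePoint ℂ) (pinv ∞) = ((0 : ℂ) : OnePoint ℂ) := by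
        simp [pmul, pinv]
      simp only [h0] at hx
      exact (hM (((0 : ℂ) : OnePoint ℂ), (∞ : OnePoint ℂ)) ⟨hx, hw⟩).1 rfl
    | coe b =>
      by_cases hb : b = 0
      · subst hb
        have h0 : pmul (z : OnePoint ℂ) (pinv ((0 : ℂ) : OnePoint ℂ)) = ∞ := by
          simp [pmul, pinv]
        simp only [h0] at hx
        exact (hM ((∞ : OnePoint ℂ), ((0 : ℂ) : OnePoint ℂ)) ⟨hx, hw⟩).2 rfl
      · have h0 : pmul (z : OnePoint ℂ) (pinv ((b : ℂ) : OnePoint ℂ))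
            = ((z * b⁻¹ : ℂ) : OnePoint ℂ) := by simp [pmul, pinv, hb]
        simp only [h0] at hx
        apply hzS
        refine ⟨_, hx, _, hw, ?_⟩
        show ((z * b⁻¹ * b : ℂ) : OnePoint ℂ) = ((z : ℂ) : OnePoint ℂ)
        rw [mul_assoc, inv_mul_cancel₀ hb, mul_one]
  have hTclosed : IsClosed ((fun w => pmul (z : OnePoint ℂ) (pinv w)) '' S₂) :=
    ((hS₂.isCompact).image (pmul_pinv_continuous z hz)).isClosed
  refine ⟨hsub, hTclosed.preimage continuous_subtype_val, hS₁.isCompact,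
    Set.subset_compl_comm.mp hsub⟩
end

section
/- Let S₁, S₂ be closed subsets of ℙ¹ = ℂ ∪ {∞} with 0, ∞ ∉ S₁ and 0 ∈ S₂, ∞ ∉ S₂, star-eligible, and let f₁ ∈ Hol(ℙ¹ \ S₁), f₂ ∈ Hol(ℙ¹ \ S₂). Then for z in the common domain, (f₁ ⋆ f₂)(z) − (f₂ ⋆ f₁)(z) = f₁(0)·f₂(∞), where ⋆ denotes the generalized Hadamard product defined by integration over generalized Hadamard cycles. -/
open scoped Pointwise
open intervalIntegral

/-- The integral of `f` along the (C¹, `[0,1]`-parametrized) loop `γ`. -/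
noncomputable def loopIntegral (γ : ℝ → ℂ) (f : ℂ → ℂ) : ℂ :=
  ∫ t in (0 : ℝ)..1, f (γ t) * deriv γ t

/-- The winding number (index) of the loop `γ` around the point `z`. -/
noncomputable def windingNumber (γ : ℝ → ℂ) (z : ℂ) : ℂ :=
  (2 * Real.pi * Complex.I)⁻¹ * loopIntegral γ fun w => (w - z)⁻¹

open Set Metric MeasureTheory Filter

namespace StarAux

lemma c2pi_ne : (2 * Real.pi * Complex.I : ℂ) ≠ 0 := by
  simp [Real.pi_ne_zero, Complex.I_ne_zero, Complex.ext_iff, Real.pi_pos.ne']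

lemma contOn_kernel {κ : ℝ → ℂ} (hκ : ContDiff ℝ 1 κ) {g : ℂ → ℂ} {s : Set ℝ}
    (hg : ∀ t ∈ s, ContinuousAt g (κ t)) :
    ContinuousOn (fun t => g (κ t) * deriv κ t) s := by
  refine ContinuousOn.mul ?_ (hκ.continuous_deriv le_rfl).continuousOn
  exact fun t ht => ((hg t ht).comp hκ.continuous.continuousAt).continuousWithinAt

lemma loop_ftc {κ : ℝ → ℂ} (hκ : ContDiff ℝ 1 κ) (hloop : κ 0 = κ 1)
    {Φ Φ' : ℂ → ℂ} (hΦ : ∀ t ∈ Set.uIcc (0:ℝ) 1, HasDerivAt Φ (Φ' (κ t)) (κ t))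
    (hc : ContinuousOn (fun t => Φ' (κ t) * deriv κ t) (Set.uIcc (0:ℝ) 1)) :
    ∫ t in (0:ℝ)..1, Φ' (κ t) * deriv κ t = 0 := by
  have h1 : ∀ t ∈ Set.uIcc (0:ℝ) 1, HasDerivAt (Φ ∘ κ) (Φ' (κ t) * deriv κ t) t := by
    intro t ht
    have hκd : HasDerivAt κ (deriv κ t) t := ((hκ.differentiable one_ne_zero) t).hasDerivAt
    simpa [smul_eq_mul, mul_comm] using HasDerivAt.scomp t (hΦ t ht) hκd
  rw [intervalIntegral.integral_eq_sub_of_hasDerivAt h1 hc.intervalIntegrable]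
  simp [Function.comp, hloop]

lemma hasDerivAt_paramR {F F' : ℝ → ℝ → ℂ} {x₀ : ℝ} {ε C : ℝ}
    (hε : 0 < ε)
    (hFc : ∀ x ∈ Metric.ball x₀ ε, ContinuousOn (F x) (Set.uIcc (0:ℝ) 1))
    (hF'c : ContinuousOn (F' x₀) (Set.uIcc (0:ℝ) 1))
    (hbound : ∀ t ∈ Set.uIcc (0:ℝ) 1, ∀ x ∈ Metric.ball x₀ ε, ‖F' x t‖ ≤ C)
    (hdiff : ∀ t ∈ Set.uIcc (0:ℝ) 1, ∀ x ∈ Metric.ball x₀ ε,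
      HasDerivAt (fun y => F y t) (F' x t) x) :
    HasDerivAt (fun x => ∫ t in (0:ℝ)..1, F x t) (∫ t in (0:ℝ)..1, F' x₀ t) x₀ := by
  have h := intervalIntegral.hasDerivAt_integral_of_dominated_loc_of_deriv_le
      (μ := MeasureTheory.volume) (F := F) (F' := F') (x₀ := x₀) (a := 0) (b := 1)
      (bound := fun _ => C) (s := Metric.ball x₀ ε) (Metric.ball_mem_nhds x₀ hε)
      ?_ ?_ ?_ ?_ ?_ ?_
  · exact h.2
  · refine Filter.eventually_of_mem (Metric.ball_mem_nhds x₀ hε) fun x hx => ?_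
    exact ((hFc x hx).mono Set.uIoc_subset_uIcc).aestronglyMeasurable measurableSet_uIoc
  · exact (hFc x₀ (Metric.mem_ball_self hε)).intervalIntegrable
  · exact ((hF'c.mono Set.uIoc_subset_uIcc).aestronglyMeasurable measurableSet_uIoc)
  · exact Filter.Eventually.of_forall fun t ht x hx => hbound t (Set.uIoc_subset_uIcc ht) x hx
  · exact intervalIntegrable_const
  · exact Filter.Eventually.of_forall fun t ht x hx => hdiff t (Set.uIoc_subset_uIcc ht) x hx

lemma hasDerivAt_paramC {F F' : ℂ → ℝ → ℂ} {x₀ : ℂ} {ε C : ℝ}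
    (hε : 0 < ε)
    (hFc : ∀ x ∈ Metric.ball x₀ ε, ContinuousOn (F x) (Set.uIcc (0:ℝ) 1))
    (hF'c : ContinuousOn (F' x₀) (Set.uIcc (0:ℝ) 1))
    (hbound : ∀ t ∈ Set.uIcc (0:ℝ) 1, ∀ x ∈ Metric.ball x₀ ε, ‖F' x t‖ ≤ C)
    (hdiff : ∀ t ∈ Set.uIcc (0:ℝ) 1, ∀ x ∈ Metric.ball x₀ ε,
      HasDerivAt (fun y => F y t) (F' x t) x) :
    HasDerivAt (fun x => ∫ t in (0:ℝ)..1, F x t) (∫ t in (0:ℝ)..1, F' x₀ t) x₀ := by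
  have h := intervalIntegral.hasDerivAt_integral_of_dominated_loc_of_deriv_le
      (μ := MeasureTheory.volume) (F := F) (F' := F') (x₀ := x₀) (a := 0) (b := 1)
      (bound := fun _ => C) (s := Metric.ball x₀ ε) (Metric.ball_mem_nhds x₀ hε)
      ?_ ?_ ?_ ?_ ?_ ?_
  · exact h.2
  · refine Filter.eventually_of_mem (Metric.ball_mem_nhds x₀ hε) fun x hx => ?_
    exact ((hFc x hx).mono Set.uIoc_subset_uIcc).aestronglyMeasurable measurableSet_uIoc
  · exact (hFc x₀ (Metric.mem_ball_self hε)).intervalIntegrable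
  · exact ((hF'c.mono Set.uIoc_subset_uIcc).aestronglyMeasurable measurableSet_uIoc)
  · exact Filter.Eventually.of_forall fun t ht x hx => hbound t (Set.uIoc_subset_uIcc ht) x hx
  · exact intervalIntegrable_const
  · exact Filter.Eventually.of_forall fun t ht x hx => hdiff t (Set.uIoc_subset_uIcc ht) x hx

lemma norm_loopIntegral_le {g : ℝ → ℂ} {C : ℝ}
    (h : ∀ t ∈ Set.uIcc (0:ℝ) 1, ‖g t‖ ≤ C) :
    ‖∫ t in (0:ℝ)..1, g t‖ ≤ C := by
  have := intervalIntegral.norm_integral_le_of_norm_le_const (C := C) (f := g) (a := 0) (b := 1)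
    (fun t ht => h t (Set.uIoc_subset_uIcc ht))
  simpa using this



lemma dslope_comm (f : ℂ → ℂ) (a b : ℂ) : dslope f a b = dslope f b a := by
  rcases eq_or_ne b a with h | h
  · subst h; rfl
  · rw [dslope_of_ne f h, dslope_of_ne f h.symm, slope_comm]

lemma hasDerivAt_dslope_fst {Ω : Set ℂ} (hΩ : IsOpen Ω) {f : ℂ → ℂ}
    (hf : DifferentiableOn ℂ f Ω) {a x : ℂ} (ha : a ∈ Ω) (hx : x ∈ Ω) :
    HasDerivAt (fun w => dslope f a w) (dslope (dslope f x) x a) x := by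
  have hq : DifferentiableOn ℂ (dslope f x) Ω :=
    (Complex.differentiableOn_dslope (hΩ.mem_nhds hx)).mpr hf
  rcases eq_or_ne a x with rfl | hax
  · have h := (hq.differentiableAt (hΩ.mem_nhds hx)).hasDerivAt
    rwa [dslope_same]
  · set q : ℂ → ℂ := dslope f x with hqdef
    have hqx : HasDerivAt q (deriv q x) x := (hq.differentiableAt (hΩ.mem_nhds hx)).hasDerivAt
    have hxa : x - a ≠ 0 := sub_ne_zero.mpr hax.symm
    have hN : HasDerivAt (fun w => f x - f a + (w - x) * q w)
        (1 * q x + (x - x) * deriv q x) x := by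
      exact (((hasDerivAt_id x).sub_const x).mul hqx).const_add _
    have hD : HasDerivAt (fun w => w - a) 1 x := (hasDerivAt_id x).sub_const a
    have hdiv := hN.div hD hxa
    have hfxa : f x - f a = (x - a) * q a := by
      have := sub_smul_dslope f x a
      rw [smul_eq_mul] at this
      rw [hqdef]
      linear_combination this
    have hval : (1 * q x + (x - x) * deriv q x) * (x - a) -
        (f x - f a + (x - x) * q x) * 1 = (q x - q a) * (x - a) := by
      rw [hfxa]; ring
    have hval2 : ((1 * q x + (x - x) * deriv q x) * (x - a) -
        (f x - f a + (x - x) * q x) * 1) / (x - a) ^ 2 = dslope q x a := by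
      rw [hval, dslope_of_ne q hax, slope_def_field,
        div_eq_div_iff (pow_ne_zero 2 hxa) (sub_ne_zero.mpr hax)]
      ring
    rw [hval2] at hdiv
    refine hdiv.congr_of_eventuallyEq ?_
    have hmem : {w : ℂ | w ≠ a} ∈ nhds x := (isOpen_ne).mem_nhds hax.symm
    filter_upwards [hmem] with w hw
    have : f w - f a = f x - f a + (w - x) * q w := by
      have h2 := sub_smul_dslope f x w
      rw [smul_eq_mul] at h2
      have : (w - x) * q w = f w - f x := h2
      rw [this]; ring
    rw [dslope_of_ne f hw, slope_def_field, this]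
    rfl


lemma norm_deriv_le_of_ball {g : ℂ → ℂ} {x : ℂ} {r C : ℝ} (hr : 0 < r)
    (hg : DifferentiableOn ℂ g (Metric.closedBall x r))
    (hC : ∀ u ∈ Metric.closedBall x r, ‖g u‖ ≤ C) : ‖deriv g x‖ ≤ C / r := by
  refine Complex.norm_deriv_le_of_forall_mem_sphere_norm_le hr ?_ ?_
  · exact ⟨hg.mono Metric.ball_subset_closedBall,
      (hg.continuousOn).mono Metric.closure_ball_subset_closedBall⟩
  · exact fun u hu => hC u (Metric.sphere_subset_closedBall hu)

lemma dslope_bound {Ω : Set ℂ} (hΩ : IsOpen Ω) {f : ℂ → ℂ} (hf : DifferentiableOn ℂ f Ω)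
    {A : Set ℂ} (hA : IsCompact A) (hAΩ : A ⊆ Ω) {w₀ : ℂ} {δ : ℝ} (hδ : 0 < δ)
    (hball : Metric.closedBall w₀ (4*δ) ⊆ Ω) :
    ∃ C, 0 ≤ C ∧ ∀ a ∈ A, ∀ u ∈ Metric.closedBall w₀ (3*δ), ‖dslope f a u‖ ≤ C := by
  obtain ⟨MA, hMA⟩ := hA.exists_bound_of_continuousOn (hf.continuousOn.mono hAΩ)
  have hcb4 : IsCompact (Metric.closedBall w₀ (4*δ)) := isCompact_closedBall _ _
  obtain ⟨MB, hMB⟩ := hcb4.exists_bound_of_continuousOn (hf.continuousOn.mono hball)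
  have hderiv : DifferentiableOn ℂ (deriv f) Ω := (hf.analyticOnNhd hΩ).deriv.differentiableOn
  obtain ⟨L, hL⟩ := hcb4.exists_bound_of_continuousOn
    ((hderiv.continuousOn).mono hball)
  have hL0 : 0 ≤ L := le_trans (norm_nonneg _) (hL w₀ (Metric.mem_closedBall_self (by positivity)))
  refine ⟨max L ((MA + MB)/δ), le_trans hL0 (le_max_left _ _), fun a ha u hu => ?_⟩
  by_cases hcase : a ∈ Metric.closedBall w₀ (4*δ)
  · -- both in the convex closed ball of radius 4δ
    refine le_trans ?_ (le_max_left _ _)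
    have hsub : Metric.closedBall w₀ (3*δ) ⊆ Metric.closedBall w₀ (4*δ) :=
      Metric.closedBall_subset_closedBall (by linarith)
    have hdAt : ∀ y ∈ Metric.closedBall w₀ (4*δ), DifferentiableAt ℂ f y := fun y hy =>
      hf.differentiableAt (hΩ.mem_nhds (hball hy))
    rcases eq_or_ne u a with rfl | hua
    · rw [dslope_same]
      exact hL u (hsub hu)
    · rw [dslope_of_ne f hua, slope_def_field]
      have := Convex.norm_image_sub_le_of_norm_deriv_le hdAt hL (convex_closedBall _ _)
        hcase (hsub hu)
      rw [norm_div]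
      rw [div_le_iff₀ (by simpa [sub_ne_zero] using hua : (0:ℝ) < ‖u - a‖)]
      calc ‖f u - f a‖ ≤ L * ‖u - a‖ := this
        _ = L * ‖u - a‖ := rfl
  · refine le_trans ?_ (le_max_right _ _)
    have hdist : δ ≤ dist u a := by
      have h1 : dist a w₀ > 4*δ := by simpa [Metric.mem_closedBall, not_le] using hcase
      have h2 : dist u w₀ ≤ 3*δ := hu
      have := dist_triangle a w₀ u
      rw [dist_comm u a]
      linarith [dist_triangle a u w₀, dist_comm u w₀ ▸ h2]
    have hua : u ≠ a := by
      intro h; subst h; simp at hdist; linarith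
    rw [dslope_of_ne f hua, slope_def_field, norm_div]
    rw [div_le_div_iff₀ (by simpa [sub_ne_zero] using hua : (0:ℝ) < ‖u - a‖) hδ]
    have h3 : ‖f u - f a‖ ≤ MB + MA := by
      have := norm_sub_le (f u) (f a)
      have h4 := hMB u (Metric.closedBall_subset_closedBall (by linarith) hu)
      have h5 := hMA a ha
      linarith
    have h6 : δ ≤ ‖u - a‖ := by rwa [← dist_eq_norm]
    calc ‖f u - f a‖ * δ ≤ (MB + MA) * ‖u - a‖ := by
          apply mul_le_mul h3 h6 (le_of_lt hδ)
          linarith [norm_nonneg (f u - f a), (norm_nonneg (f a)).trans (hMA a ha),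
            (norm_nonneg (f u)).trans (hMB u (Metric.closedBall_subset_closedBall (by linarith) hu))]
      _ = (MA + MB) * ‖u - a‖ := by ring




set_option maxHeartbeats 1000000 in
lemma windingNumber_eq_of_segment {κ : ℝ → ℂ} (hκ : ContDiff ℝ 1 κ) (hloop : κ 0 = κ 1)
    {p q : ℂ}
    (hsafe : ∀ s ∈ Set.Icc (0:ℝ) 1, ∀ t ∈ Set.uIcc (0:ℝ) 1, κ t ≠ p + (s : ℂ) * (q - p)) :
    windingNumber κ p = windingNumber κ q := by
  rcases eq_or_ne q p with rfl | hqp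
  · rfl
  set ℓ : ℝ → ℂ := fun s => p + (s:ℂ) * (q - p) with hℓdef
  have hM : 0 < ‖q - p‖ := by simpa [sub_ne_zero] using hqp
  set M : ℝ := ‖q - p‖ with hMdef
  -- minimum distance from the curve to the segment
  have hKc : IsCompact (Set.Icc (0:ℝ) 1 ×ˢ Set.uIcc (0:ℝ) 1) :=
    (isCompact_Icc).prod isCompact_uIcc
  have hKne : (Set.Icc (0:ℝ) 1 ×ˢ Set.uIcc (0:ℝ) 1).Nonempty :=
    ⟨(0, 0), by constructor <;> simp⟩
  have hcont : ContinuousOn (fun st : ℝ × ℝ => ‖κ st.2 - ℓ st.1‖)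
      (Set.Icc (0:ℝ) 1 ×ˢ Set.uIcc (0:ℝ) 1) := by
    apply Continuous.continuousOn
    have : Continuous ℓ :=
      continuous_const.add (Complex.continuous_ofReal.mul continuous_const)
    exact ((hκ.continuous.comp continuous_snd).sub (this.comp continuous_fst)).norm
  obtain ⟨st₀, hst₀, hmin⟩ := hKc.exists_isMinOn hKne hcont
  set ρ : ℝ := ‖κ st₀.2 - ℓ st₀.1‖ with hρdef
  have hρ : 0 < ρ := by
    rw [hρdef, norm_pos_iff, sub_ne_zero]
    exact hsafe st₀.1 (Set.mem_prod.mp hst₀).1 st₀.2 (Set.mem_prod.mp hst₀).2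
  have hmin' : ∀ s ∈ Set.Icc (0:ℝ) 1, ∀ t ∈ Set.uIcc (0:ℝ) 1, ρ ≤ ‖κ t - ℓ s‖ :=
    fun s hs t ht => hmin (Set.mk_mem_prod hs ht)
  set δ : ℝ := ρ / (2 * M) with hδdef
  have hδ : 0 < δ := by positivity
  -- points within δ of the segment parameter interval are still far from the curve
  have hfar : ∀ s₀ ∈ Set.Icc (0:ℝ) 1, ∀ s' ∈ Metric.ball s₀ δ,
      ∀ t ∈ Set.uIcc (0:ℝ) 1, ρ/2 ≤ ‖κ t - ℓ s'‖ := by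
    intro s₀ hs₀ s' hs' t ht
    set s'' : ℝ := max 0 (min 1 s') with hs''def
    have hs''mem : s'' ∈ Set.Icc (0:ℝ) 1 := by
      constructor
      · exact le_max_left _ _
      · simp only [hs''def, max_le_iff]
        exact ⟨zero_le_one, min_le_left _ _⟩
    have hclose : |s' - s''| < δ := by
      have hd : |s' - s₀| < δ := by simpa [Real.dist_eq] using hs'
      rcases le_total s' 0 with h0 | h0
      · have : s'' = 0 := by
          simp only [hs''def, max_eq_left_iff]
          exact le_trans (min_le_right _ _) h0
        rw [this, sub_zero]
        have h1 : (0:ℝ) ≤ s₀ := hs₀.1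
        rw [abs_of_nonpos h0]
        rw [abs_lt] at hd
        linarith [hd.1]
      · rcases le_total 1 s' with h1 | h1
        · have : s'' = 1 := by
            simp only [hs''def, min_eq_left h1]
            exact max_eq_right zero_le_one
          rw [this]
          have h2 : s₀ ≤ 1 := hs₀.2
          rw [abs_of_nonneg (by linarith)]
          rw [abs_lt] at hd
          linarith [hd.2]
        · have : s'' = s' := by
            simp only [hs''def, min_eq_right h1]
            exact max_eq_right h0
          rw [this]; simpa using hδ
    have hnorm : ‖ℓ s'' - ℓ s'‖ = |s'' - s'| * M := by
      have : ℓ s'' - ℓ s' = ((s'' - s' : ℝ) : ℂ) * (q - p) := by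
        simp only [hℓdef]
        push_cast
        ring
      rw [this, norm_mul, Complex.norm_real, Real.norm_eq_abs, hMdef]
    have htri : ρ ≤ ‖κ t - ℓ s''‖ := hmin' s'' hs''mem t ht
    have h2 : ‖κ t - ℓ s''‖ - ‖ℓ s'' - ℓ s'‖ ≤ ‖κ t - ℓ s'‖ := by
      have h3 : ‖κ t - ℓ s''‖ ≤ ‖κ t - ℓ s'‖ + ‖ℓ s'' - ℓ s'‖ := by
        calc ‖κ t - ℓ s''‖ = ‖(κ t - ℓ s') - (ℓ s'' - ℓ s')‖ := by congr 1; ring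
          _ ≤ ‖κ t - ℓ s'‖ + ‖ℓ s'' - ℓ s'‖ := norm_sub_le _ _
      linarith
    have h4 : |s'' - s'| * M ≤ δ * M := by
      apply mul_le_mul_of_nonneg_right _ (le_of_lt hM)
      rw [abs_sub_comm]
      exact le_of_lt hclose
    have h5 : δ * M = ρ / 2 := by
      rw [hδdef]
      field_simp
    rw [hnorm] at h2
    linarith
  -- the parametrized integral
  obtain ⟨C₀, hC₀⟩ := (isCompact_uIcc (a := (0:ℝ)) (b := 1)).exists_bound_of_continuousOn
    (hκ.continuous_deriv le_rfl).continuousOn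
  have hC₀0 : 0 ≤ C₀ := le_trans (norm_nonneg _) (hC₀ 0 (by simp))
  set I : ℝ → ℂ := fun s => ∫ t in (0:ℝ)..1, (κ t - ℓ s)⁻¹ * deriv κ t with hIdef
  have hI : ∀ s₀ ∈ Set.Icc (0:ℝ) 1, HasDerivAt I 0 s₀ := by
    intro s₀ hs₀
    have hne : ∀ s' ∈ Metric.ball s₀ δ, ∀ t ∈ Set.uIcc (0:ℝ) 1, κ t - ℓ s' ≠ 0 := by
      intro s' hs' t ht
      have := hfar s₀ hs₀ s' hs' t ht
      intro h
      rw [h, norm_zero] at this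
      linarith
    have hline : ∀ s' : ℝ, HasDerivAt (fun y : ℝ => ℓ y) (q - p) s' := by
      intro s'
      have h1 : HasDerivAt (fun y : ℝ => (y:ℂ)) 1 s' := by
        simpa using (hasDerivAt_id s').ofReal_comp
      simpa [hℓdef] using (h1.mul_const (q - p)).const_add p
    have key := hasDerivAt_paramR (F := fun s t => (κ t - ℓ s)⁻¹ * deriv κ t)
      (F' := fun s t => ((q - p) * ((κ t - ℓ s)⁻¹)^2) * deriv κ t) (x₀ := s₀)
      (C := M * (2/ρ)^2 * C₀) hδ ?_ ?_ ?_ ?_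
    · have hzero : (∫ t in (0:ℝ)..1, ((q - p) * ((κ t - ℓ s₀)⁻¹)^2) * deriv κ t) = 0 := by
        have hrw : (fun t => ((q - p) * ((κ t - ℓ s₀)⁻¹)^2) * deriv κ t) =
            (fun t => (q - p) * (((κ t - ℓ s₀)⁻¹)^2 * deriv κ t)) := by
          funext t; ring
        rw [hrw, intervalIntegral.integral_const_mul]
        have hs₀b : s₀ ∈ Metric.ball s₀ δ := Metric.mem_ball_self hδ
        have hftc := loop_ftc hκ hloop (Φ := fun u => -(u - ℓ s₀)⁻¹)
          (Φ' := fun u => ((u - ℓ s₀)⁻¹)^2) ?_ ?_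
        · rw [hftc]; ring
        · intro t ht
          have h2 := (((hasDerivAt_id (κ t)).sub_const (ℓ s₀)).inv (hne s₀ hs₀b t ht)).neg
          refine h2.congr_deriv ?_
          simp [inv_pow, neg_div]
        · exact contOn_kernel hκ (g := fun u => ((u - ℓ s₀)⁻¹)^2) fun t ht =>
            (ContinuousAt.pow (ContinuousAt.inv₀
              ((continuous_id.sub continuous_const).continuousAt) (hne s₀ hs₀b t ht)) 2)
      rw [hzero] at key
      exact key
    · intro x hx
      exact contOn_kernel hκ (g := fun u => (u - ℓ x)⁻¹) fun t ht =>
        ContinuousAt.inv₀ ((continuous_id.sub continuous_const).continuousAt) (hne x hx t ht)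
    · refine contOn_kernel hκ (g := fun u => (q - p) * ((u - ℓ s₀)⁻¹)^2) fun t ht => ?_
      have hs₀b : s₀ ∈ Metric.ball s₀ δ := Metric.mem_ball_self hδ
      exact (continuousAt_const.mul
        (ContinuousAt.pow (ContinuousAt.inv₀
          ((continuous_id.sub continuous_const).continuousAt) (hne s₀ hs₀b t ht)) 2))
    · intro t ht x hx
      have h1 := hfar s₀ hs₀ x hx t ht
      rw [norm_mul, norm_mul, norm_pow, norm_inv]
      have h2 : ‖(κ t - ℓ x)‖⁻¹ ≤ 2/ρ := by
        have hpos : (0:ℝ) < ‖κ t - ℓ x‖ := lt_of_lt_of_le (by positivity) h1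
        rw [inv_le_comm₀ hpos (by positivity), inv_div]
        linarith
      calc ‖q - p‖ * ‖κ t - ℓ x‖⁻¹^2 * ‖deriv κ t‖ ≤ M * (2/ρ)^2 * C₀ := by
            apply mul_le_mul _ (hC₀ t ht) (norm_nonneg _) (by positivity)
            apply mul_le_mul le_rfl (pow_le_pow_left₀ (by positivity) h2 2)
              (by positivity) (le_of_lt hM)
        _ = M * (2/ρ)^2 * C₀ := rfl
    · intro t ht x hx
      have hu : HasDerivAt (fun y : ℝ => κ t - ℓ y) (-(q - p)) x := by
        have h1 : HasDerivAt (fun y : ℝ => (y:ℂ)) 1 x := by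
          simpa using (hasDerivAt_id x).ofReal_comp
        simpa using ((h1.mul_const (q - p)).const_add p).const_sub (κ t)
      have hinv := HasDerivAt.scomp (x := x) (hasDerivAt_inv (hne x hx t ht)) hu
      have h2 := hinv.mul_const (deriv κ t)
      have heqf : (fun y : ℝ => ((fun w : ℂ => w⁻¹) ∘ fun y : ℝ => κ t - ℓ y) y * deriv κ t)
          = fun y : ℝ => (κ t - ℓ y)⁻¹ * deriv κ t := rfl
      rw [heqf] at h2
      refine h2.congr_deriv ?_
      simp only [smul_eq_mul, inv_pow]
      ring
  -- I is constant on [0,1]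
  have hconst : I 1 = I 0 := by
    have := Convex.norm_image_sub_le_of_norm_deriv_le (f := I) (C := 0)
      (fun x hx => (hI x hx).differentiableAt)
      (fun x hx => by rw [(hI x hx).deriv]; simp) (convex_Icc (0:ℝ) 1)
      (Set.left_mem_Icc.mpr zero_le_one) (Set.right_mem_Icc.mpr zero_le_one)
    have h0 : ‖I 1 - I 0‖ ≤ 0 := by simpa using this
    have := le_antisymm h0 (norm_nonneg _)
    rwa [norm_eq_zero, sub_eq_zero] at this
  have hp : windingNumber κ p = (2 * Real.pi * Complex.I)⁻¹ * I 0 := by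
    simp only [windingNumber, loopIntegral, hIdef]
    congr 1
    apply intervalIntegral.integral_congr
    intro t ht
    simp [hℓdef]
  have hq2 : windingNumber κ q = (2 * Real.pi * Complex.I)⁻¹ * I 1 := by
    simp only [windingNumber, loopIntegral, hIdef]
    congr 1
    apply intervalIntegral.integral_congr
    intro t ht
    simp [hℓdef]
  rw [hp, hq2, hconst]

lemma windingNumber_eq_zero_of_large {κ : ℝ → ℂ} (hκ : ContDiff ℝ 1 κ) (hloop : κ 0 = κ 1)
    {R : ℝ} (hR : ∀ t ∈ Set.uIcc (0:ℝ) 1, ‖κ t‖ ≤ R) {p : ℂ} (hp : R < ‖p‖) :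
    windingNumber κ p = 0 := by
  obtain ⟨C₀, hC₀⟩ := (isCompact_uIcc (a := (0:ℝ)) (b := 1)).exists_bound_of_continuousOn
    (hκ.continuous_deriv le_rfl).continuousOn
  have hC₀0 : 0 ≤ C₀ := le_trans (norm_nonneg _) (hC₀ 0 (by simp))
  have hR0 : 0 ≤ R := le_trans (norm_nonneg _) (hR 0 (by simp))
  have hp0 : 0 < ‖p‖ := lt_of_le_of_lt hR0 hp
  set C₁ : ℝ := ‖((2 * Real.pi * Complex.I : ℂ))⁻¹‖ * C₀ with hC₁def
  have hC₁0 : 0 ≤ C₁ := mul_nonneg (norm_nonneg _) hC₀0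
  have hstep : ∀ S : ℝ, 1 ≤ S → windingNumber κ p = windingNumber κ ((S:ℂ) * p) := by
    intro S hS
    apply windingNumber_eq_of_segment hκ hloop
    intro s hs t ht hbad
    have heq : p + (s:ℂ) * ((S:ℂ)*p - p) = ((1 + s*(S-1) : ℝ) : ℂ) * p := by push_cast; ring
    have hnorm : ‖p + (s:ℂ) * ((S:ℂ)*p - p)‖ = (1 + s*(S-1)) * ‖p‖ := by
      rw [heq, norm_mul, Complex.norm_real, Real.norm_eq_abs,
        abs_of_nonneg (by nlinarith [hs.1, hs.2])]
    have hge : ‖p‖ ≤ ‖κ t‖ := by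
      rw [hbad, hnorm]
      nlinarith [mul_nonneg (mul_nonneg hs.1 (sub_nonneg.mpr hS)) hp0.le]
    have := hR t ht
    linarith
  have hbnd : ∀ S : ℝ, 1 ≤ S → ‖windingNumber κ ((S:ℂ)*p)‖ ≤ C₁/(S*‖p‖ - R) := by
    intro S hS
    have hpos : 0 < S*‖p‖ - R := by nlinarith
    have hlow : ∀ t ∈ Set.uIcc (0:ℝ) 1, S*‖p‖ - R ≤ ‖κ t - (S:ℂ)*p‖ := by
      intro t ht
      have h1 : ‖(S:ℂ)*p‖ = S*‖p‖ := by
        rw [norm_mul, Complex.norm_real, Real.norm_eq_abs, abs_of_pos (by linarith)]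
      have h2 : ‖(S:ℂ)*p‖ - ‖κ t‖ ≤ ‖κ t - (S:ℂ)*p‖ := by
        rw [norm_sub_rev]
        exact le_trans (sub_le_sub_left (le_refl _) _) (norm_sub_norm_le _ _)
      have := hR t ht
      linarith [h1 ▸ h2]
    rw [windingNumber, loopIntegral, norm_mul, hC₁def, mul_div_assoc]
    apply mul_le_mul_of_nonneg_left _ (norm_nonneg _)
    apply norm_loopIntegral_le
    intro t ht
    rw [norm_mul, norm_inv]
    have h3 : ‖κ t - (S:ℂ)*p‖⁻¹ ≤ (S*‖p‖ - R)⁻¹ := by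
      apply inv_anti₀ hpos (hlow t ht)
    calc ‖κ t - (S:ℂ)*p‖⁻¹ * ‖deriv κ t‖ ≤ (S*‖p‖ - R)⁻¹ * C₀ :=
          mul_le_mul h3 (hC₀ t ht) (norm_nonneg _) (by positivity)
      _ = C₀ / (S*‖p‖ - R) := by rw [inv_mul_eq_div]
  have hsmall : ∀ ε : ℝ, 0 < ε → ‖windingNumber κ p‖ ≤ ε := by
    intro ε hε
    set S : ℝ := max 1 ((C₁/ε + R)/‖p‖) with hSdef
    have hS1 : (1:ℝ) ≤ S := le_max_left _ _
    rw [hstep S hS1]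
    refine le_trans (hbnd S hS1) ?_
    have h2 : (C₁/ε + R)/‖p‖ ≤ S := le_max_right _ _
    have h3 : C₁/ε + R ≤ S * ‖p‖ := by rwa [div_le_iff₀ hp0] at h2
    have h4 : C₁/ε ≤ S*‖p‖ - R := by linarith
    have hpos : 0 < S*‖p‖ - R := by nlinarith
    rw [div_le_iff₀ hpos]
    calc C₁ = C₁/ε * ε := by field_simp
      _ ≤ (S*‖p‖ - R) * ε := mul_le_mul_of_nonneg_right h4 hε.le
      _ = ε * (S*‖p‖ - R) := mul_comm _ _
  by_contra hne
  have hpos : 0 < ‖windingNumber κ p‖ := norm_pos_iff.mpr hne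
  have := hsmall (‖windingNumber κ p‖/2) (by positivity)
  linarith

lemma dslope_integral_split {κ : ℝ → ℂ} (hκ : ContDiff ℝ 1 κ) {f : ℂ → ℂ} {w : ℂ}
    (hoff : ∀ t ∈ Set.uIcc (0:ℝ) 1, κ t ≠ w)
    (hfc : ∀ t ∈ Set.uIcc (0:ℝ) 1, ContinuousAt f (κ t)) :
    (∫ t in (0:ℝ)..1, dslope f w (κ t) * deriv κ t) =
      loopIntegral κ (fun ζ => f ζ * (ζ - w)⁻¹) -
        f w * ((2 * Real.pi * Complex.I) * windingNumber κ w) := by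
  have hw : f w * ((2*Real.pi*Complex.I) * windingNumber κ w)
      = f w * loopIntegral κ (fun ζ => (ζ - w)⁻¹) := by
    rw [windingNumber, ← mul_assoc, ← mul_assoc, mul_assoc (f w), mul_inv_cancel₀ c2pi_ne,
      mul_one]
  have hne : ∀ t ∈ Set.uIcc (0:ℝ) 1, κ t - w ≠ 0 := fun t ht =>
    sub_ne_zero.mpr (hoff t ht)
  have hint1 : IntervalIntegrable (fun t => f (κ t) * (κ t - w)⁻¹ * deriv κ t)
      MeasureTheory.volume 0 1 :=
    (contOn_kernel hκ (g := fun ζ => f ζ * (ζ - w)⁻¹) fun t ht =>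
      (hfc t ht).mul (ContinuousAt.inv₀
        ((continuous_id.sub continuous_const).continuousAt) (hne t ht))).intervalIntegrable
  have hint2 : IntervalIntegrable (fun t => f w * ((κ t - w)⁻¹ * deriv κ t))
      MeasureTheory.volume 0 1 := by
    apply IntervalIntegrable.const_mul
    exact (contOn_kernel hκ (g := fun ζ => (ζ - w)⁻¹) fun t ht =>
      ContinuousAt.inv₀ ((continuous_id.sub continuous_const).continuousAt)
        (hne t ht)).intervalIntegrable
  rw [hw, loopIntegral, loopIntegral, ← intervalIntegral.integral_const_mul,
    ← intervalIntegral.integral_sub hint1 hint2]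
  apply intervalIntegral.integral_congr
  intro t ht
  show dslope f w (κ t) * deriv κ t = _
  rw [dslope_of_ne f (hoff t ht), slope_def_field, div_eq_mul_inv]
  ring

set_option maxHeartbeats 2000000 in
lemma dixon {Ω : Set ℂ} (hΩ : IsOpen Ω) {f : ℂ → ℂ} (hf : DifferentiableOn ℂ f Ω)
    {n : ℕ} {κ : Fin n → ℝ → ℂ}
    (hκC : ∀ k, ContDiff ℝ 1 (κ k)) (hκl : ∀ k, κ k 0 = κ k 1)
    (hmem : ∀ k (t : ℝ), κ k t ∈ Ω)
    (hWzero : ∀ p, p ∉ Ω → (∑ k, windingNumber (κ k) p) = 0)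
    {w₀ : ℂ} (hw₀ : w₀ ∈ Ω) (hoff : ∀ k (t : ℝ), κ k t ≠ w₀) :
    ∑ k, loopIntegral (κ k) (fun ζ => f ζ * (ζ - w₀)⁻¹) =
      (2 * Real.pi * Complex.I) * (∑ k, windingNumber (κ k) w₀) * f w₀ := by
  classical
  rcases Nat.eq_zero_or_pos n with rfl | hn
  · simp
  have hfin : Nonempty (Fin n) := ⟨⟨0, hn⟩⟩
  -- the union of the curve images
  set U : Set ℂ := ⋃ k, κ k '' Set.uIcc (0:ℝ) 1 with hUdef
  have hUc : IsCompact U := isCompact_iUnion fun k => isCompact_uIcc.image (hκC k).continuous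
  have hUΩ : U ⊆ Ω := by
    rintro x hx
    rw [hUdef, Set.mem_iUnion] at hx
    obtain ⟨k, t, _, rfl⟩ := hx
    exact hmem k t
  have hUne : U.Nonempty := ⟨κ ⟨0, hn⟩ 0, Set.mem_iUnion.mpr ⟨⟨0, hn⟩, ⟨0, by simp, rfl⟩⟩⟩
  obtain ⟨R, hRU⟩ := hUc.isBounded.subset_closedBall 0
  have hRk : ∀ k, ∀ t ∈ Set.uIcc (0:ℝ) 1, ‖κ k t‖ ≤ R := fun k t ht =>
    mem_closedBall_zero_iff.mp (hRU (Set.mem_iUnion.mpr ⟨k, ⟨t, ht, rfl⟩⟩))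
  have hR0 : 0 ≤ R := le_trans (norm_nonneg _) (hRk ⟨0, hn⟩ 0 (by simp))
  -- bounds for each curve
  have hMf : ∀ k : Fin n, ∃ M : ℝ, 0 ≤ M ∧ ∀ t ∈ Set.uIcc (0:ℝ) 1, ‖f (κ k t)‖ ≤ M := by
    intro k
    obtain ⟨M, hM⟩ := (isCompact_uIcc (a := (0:ℝ)) (b := 1)).exists_bound_of_continuousOn
      (fun t ht => ((hf.continuousOn.continuousAt
        (hΩ.mem_nhds (hmem k t))).comp (hκC k).continuous.continuousAt).continuousWithinAt)
    exact ⟨M, le_trans (norm_nonneg _) (hM 0 (by simp)), hM⟩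
  choose Mf hMf0 hMfb using hMf
  have hC₀ : ∀ k : Fin n, ∃ M : ℝ, 0 ≤ M ∧ ∀ t ∈ Set.uIcc (0:ℝ) 1, ‖deriv (κ k) t‖ ≤ M := by
    intro k
    obtain ⟨M, hM⟩ := (isCompact_uIcc (a := (0:ℝ)) (b := 1)).exists_bound_of_continuousOn
      ((hκC k).continuous_deriv le_rfl).continuousOn
    exact ⟨M, le_trans (norm_nonneg _) (hM 0 (by simp)), hM⟩
  choose C₀ hC₀0 hC₀b using hC₀
  set B : ℝ := ∑ k, Mf k * C₀ k with hBdef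
  have hB0 : 0 ≤ B := Finset.sum_nonneg fun k _ => mul_nonneg (hMf0 k) (hC₀0 k)
  -- the two functions
  set h₁ : ℂ → ℂ := fun w => ∑ k, ∫ t in (0:ℝ)..1, dslope f w (κ k t) * deriv (κ k) t
    with h₁def
  set h₂ : ℂ → ℂ := fun w => ∑ k, loopIntegral (κ k) (fun ζ => f ζ * (ζ - w)⁻¹) with h₂def
  set W : ℂ → ℂ := fun w => ∑ k, windingNumber (κ k) w with hWdef
  -- splitting h₁ off the curves
  have hsplit : ∀ w : ℂ, (∀ k, ∀ t ∈ Set.uIcc (0:ℝ) 1, κ k t ≠ w) →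
      h₁ w = h₂ w - f w * ((2 * Real.pi * Complex.I) * W w) := by
    intro w hw
    rw [h₁def, h₂def, hWdef]
    simp only [Finset.mul_sum, ← Finset.sum_sub_distrib]
    refine Finset.sum_congr rfl fun k _ => ?_
    rw [dslope_integral_split (hκC k) (hw k) (fun t ht =>
      hf.continuousOn.continuousAt (hΩ.mem_nhds (hmem k t)))]
  -- h₁ is differentiable on Ω
  have hdΩ : ∀ w ∈ Ω, DifferentiableAt ℂ h₁ w := by
    intro w hw
    refine DifferentiableAt.fun_sum fun k _ => ?_
    obtain ⟨r, hr, hrΩ⟩ := Metric.isOpen_iff.mp hΩ w hw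
    set δ : ℝ := r/8 with hδdef
    have hδ : 0 < δ := by positivity
    have h4δ : Metric.closedBall w (4*δ) ⊆ Ω := by
      intro y hy
      apply hrΩ
      rw [Metric.mem_closedBall] at hy
      rw [Metric.mem_ball]
      calc dist y w ≤ 4*δ := hy
        _ < r := by rw [hδdef]; linarith
    have hAcomp : IsCompact (κ k '' Set.uIcc (0:ℝ) 1) :=
      isCompact_uIcc.image (hκC k).continuous
    have hAΩ : κ k '' Set.uIcc (0:ℝ) 1 ⊆ Ω := by rintro _ ⟨t, _, rfl⟩; exact hmem k t
    obtain ⟨C, hC0, hC⟩ := dslope_bound hΩ hf hAcomp hAΩ hδ h4δ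
    have hballΩ : ∀ x ∈ Metric.ball w δ, x ∈ Ω := fun x hx =>
      h4δ (Metric.mem_closedBall.mpr (le_trans (Metric.mem_ball.mp hx).le (by linarith)))
    refine HasDerivAt.differentiableAt (hasDerivAt_paramC (x₀ := w) (ε := δ)
      (F := fun x t => dslope f x (κ k t) * deriv (κ k) t)
      (F' := fun x t => dslope (dslope f x) x (κ k t) * deriv (κ k) t)
      (C := C/(2*δ) * C₀ k) hδ ?_ ?_ ?_ ?_)
    · intro x hx
      have hxΩ : x ∈ Ω := hballΩ x hx
      have hds : DifferentiableOn ℂ (dslope f x) Ω :=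
        (Complex.differentiableOn_dslope (hΩ.mem_nhds hxΩ)).mpr hf
      exact contOn_kernel (hκC k) (g := dslope f x) fun t ht =>
        hds.continuousOn.continuousAt (hΩ.mem_nhds (hmem k t))
    · have hq : DifferentiableOn ℂ (dslope f w) Ω :=
        (Complex.differentiableOn_dslope (hΩ.mem_nhds hw)).mpr hf
      have hdd : DifferentiableOn ℂ (dslope (dslope f w) w) Ω :=
        (Complex.differentiableOn_dslope (hΩ.mem_nhds hw)).mpr hq
      exact contOn_kernel (hκC k) (g := dslope (dslope f w) w) fun t ht =>
        hdd.continuousOn.continuousAt (hΩ.mem_nhds (hmem k t))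
    · intro t ht x hx
      have hxΩ : x ∈ Ω := hballΩ x hx
      have hkey : dslope (dslope f x) x (κ k t) = deriv (dslope f (κ k t)) x :=
        (hasDerivAt_dslope_fst hΩ hf (hmem k t) hxΩ).deriv.symm
      rw [norm_mul, hkey]
      have hsub : Metric.closedBall x (2*δ) ⊆ Metric.closedBall w (3*δ) := by
        intro u hu
        rw [Metric.mem_closedBall] at hu ⊢
        calc dist u w ≤ dist u x + dist x w := dist_triangle _ _ _
          _ ≤ 2*δ + δ := add_le_add hu (Metric.mem_ball.mp hx).le
          _ = 3*δ := by ring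
      have hdls : DifferentiableOn ℂ (dslope f (κ k t)) (Metric.closedBall x (2*δ)) :=
        ((Complex.differentiableOn_dslope (hΩ.mem_nhds (hmem k t))).mpr hf).mono
          (subset_trans hsub (subset_trans
            (Metric.closedBall_subset_closedBall (by linarith)) h4δ))
      have hbd := norm_deriv_le_of_ball (x := x) (r := 2*δ) (C := C) (by positivity) hdls
        (fun u hu => hC (κ k t) ⟨t, ht, rfl⟩ u (hsub hu))
      calc ‖deriv (dslope f (κ k t)) x‖ * ‖deriv (κ k) t‖ ≤ (C/(2*δ)) * C₀ k :=
            mul_le_mul hbd (hC₀b k t ht) (norm_nonneg _) (by positivity)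
        _ = C/(2*δ) * C₀ k := rfl
    · intro t ht x hx
      have hxΩ : x ∈ Ω := hballΩ x hx
      have h := (hasDerivAt_dslope_fst hΩ hf (hmem k t) hxΩ).mul_const (deriv (κ k) t)
      have hfun : (fun y => dslope f (κ k t) y * deriv (κ k) t)
          = fun y => dslope f y (κ k t) * deriv (κ k) t := by
        funext y; rw [dslope_comm]
      rwa [hfun] at h
  -- distance to the curves is positive off the curves, winding locally constant
  have hWloc : ∀ w : ℂ, (∀ k, ∀ t ∈ Set.uIcc (0:ℝ) 1, κ k t ≠ w) →
      ∃ d > 0, (∀ x ∈ U, d ≤ dist x w) ∧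
        ∀ w' ∈ Metric.ball w d, W w' = W w ∧ (∀ k, ∀ t ∈ Set.uIcc (0:ℝ) 1, κ k t ≠ w') := by
    intro w hw
    obtain ⟨x₀, hx₀U, hx₀min⟩ := hUc.exists_isMinOn hUne
      (continuous_dist.comp (continuous_id.prodMk continuous_const)).continuousOn
    set d : ℝ := dist x₀ w with hddef
    have hd : 0 < d := by
      rw [hddef, dist_pos]
      rw [hUdef, Set.mem_iUnion] at hx₀U
      obtain ⟨k, t, ht, rfl⟩ := hx₀U
      exact hw k t ht
    have hdmin : ∀ x ∈ U, d ≤ dist x w := fun x hx => hx₀min hx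
    refine ⟨d, hd, hdmin, fun w' hw' => ?_⟩
    have hoff' : ∀ k, ∀ t ∈ Set.uIcc (0:ℝ) 1, κ k t ≠ w' := by
      intro k t ht heq
      have h1 := hdmin (κ k t) (Set.mem_iUnion.mpr ⟨k, ⟨t, ht, rfl⟩⟩)
      rw [heq] at h1
      have := Metric.mem_ball.mp hw'
      rw [dist_comm] at h1
      linarith [dist_comm w' w ▸ this]
    constructor
    · rw [hWdef]
      refine Finset.sum_congr rfl fun k _ => ?_
      apply windingNumber_eq_of_segment (hκC k) (hκl k)
      intro s hs t ht heq
      have h1 := hdmin (κ k t) (Set.mem_iUnion.mpr ⟨k, ⟨t, ht, rfl⟩⟩)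
      have h2 : dist (w' + (s:ℂ) * (w - w')) w < d := by
        have : w' + (s:ℂ) * (w - w') - w = ((1 - s : ℝ) : ℂ) * (w' - w) := by
          push_cast; ring
        rw [dist_eq_norm, this, norm_mul, Complex.norm_real, Real.norm_eq_abs,
          abs_of_nonneg (by linarith [hs.2])]
        calc (1 - s) * ‖w' - w‖ ≤ 1 * ‖w' - w‖ := by
              apply mul_le_mul_of_nonneg_right (by linarith [hs.1]) (norm_nonneg _)
          _ = ‖w' - w‖ := one_mul _
          _ < d := by rw [← dist_eq_norm]; exact Metric.mem_ball.mp hw'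
      rw [heq] at h1
      linarith
    · exact hoff'
  -- h₁ is differentiable off Ω
  have hdcompl : ∀ w, w ∉ Ω → DifferentiableAt ℂ h₁ w := by
    intro w hw
    have hwoff : ∀ k, ∀ t ∈ Set.uIcc (0:ℝ) 1, κ k t ≠ w := by
      intro k t ht heq
      exact hw (hUΩ (heq ▸ Set.mem_iUnion.mpr ⟨k, ⟨t, ht, rfl⟩⟩))
    obtain ⟨d, hd, hdmin, hball⟩ := hWloc w hwoff
    -- h₁ = h₂ on the ball
    have heq : ∀ w' ∈ Metric.ball w d, h₁ w' = h₂ w' := by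
      intro w' hw'
      obtain ⟨hWeq, hoff'⟩ := hball w' hw'
      have hW0' : W w = 0 := by simp only [hWdef]; exact hWzero w hw
      rw [hsplit w' hoff', hWeq, hW0']
      simp
    -- h₂ is differentiable at w
    have hd2 : DifferentiableAt ℂ h₂ w := by
      refine DifferentiableAt.fun_sum fun k _ => ?_
      have hne : ∀ t ∈ Set.uIcc (0:ℝ) 1, ∀ x ∈ Metric.ball w (d/2), κ k t - x ≠ 0 := by
        intro t ht x hx heq
        have h1 := hdmin (κ k t) (Set.mem_iUnion.mpr ⟨k, ⟨t, ht, rfl⟩⟩)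
        have h2 : dist (κ k t) w ≤ dist (κ k t) x + dist x w := dist_triangle _ _ _
        have h3 : dist (κ k t) x = 0 := by rw [dist_eq_norm, heq, norm_zero]
        have h4 := Metric.mem_ball.mp hx
        linarith
      simp only [loopIntegral]
      refine HasDerivAt.differentiableAt (hasDerivAt_paramC (x₀ := w) (ε := d/2)
        (F := fun x t => f (κ k t) * (κ k t - x)⁻¹ * deriv (κ k) t)
        (F' := fun x t => f (κ k t) * (-(-1) / (κ k t - x)^2) * deriv (κ k) t)
        (C := Mf k * (2/d)^2 * C₀ k) (by linarith) ?_ ?_ ?_ ?_)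
      · intro x hx
        exact contOn_kernel (hκC k) (g := fun ζ => f ζ * (ζ - x)⁻¹) fun t ht =>
          ((hf.continuousOn.continuousAt (hΩ.mem_nhds (hmem k t))).mul
            (ContinuousAt.inv₀ ((continuous_id.sub continuous_const).continuousAt)
              (hne t ht x hx)))
      · refine contOn_kernel (hκC k) (g := fun ζ => f ζ * (-(-1) / (ζ - w)^2)) fun t ht => ?_
        have hxw : w ∈ Metric.ball w (d/2) := Metric.mem_ball_self (by linarith)
        refine (hf.continuousOn.continuousAt (hΩ.mem_nhds (hmem k t))).mul
          (ContinuousAt.div continuousAt_const ?_ (pow_ne_zero 2 (hne t ht w hxw)))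
        exact ContinuousAt.pow ((continuous_id.sub continuous_const).continuousAt) 2
      · intro t ht x hx
        have hlow : d/2 ≤ ‖κ k t - x‖ := by
          have h1 := hdmin (κ k t) (Set.mem_iUnion.mpr ⟨k, ⟨t, ht, rfl⟩⟩)
          have h2 : dist (κ k t) w ≤ dist (κ k t) x + dist x w := dist_triangle _ _ _
          have h4 := Metric.mem_ball.mp hx
          rw [← dist_eq_norm]
          linarith
        rw [norm_mul, norm_mul, norm_div, norm_pow]
        have h5 : ‖(-(-1) : ℂ)‖ = 1 := by norm_num
        rw [h5]
        have hp2 : (0:ℝ) < ‖κ k t - x‖ := lt_of_lt_of_le (by linarith) hlow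
        have h6 : 1/‖κ k t - x‖^2 ≤ (2/d)^2 := by
          rw [div_le_iff₀ (pow_pos hp2 2)]
          have h7 : (d/2)^2 ≤ ‖κ k t - x‖^2 := by
            apply pow_le_pow_left₀ (by linarith) hlow
          calc (1:ℝ) = (2/d)^2 * (d/2)^2 := by field_simp
            _ ≤ (2/d)^2 * ‖κ k t - x‖^2 := by
                apply mul_le_mul_of_nonneg_left h7 (by positivity)
        calc ‖f (κ k t)‖ * (1/‖κ k t - x‖^2) * ‖deriv (κ k) t‖
            ≤ Mf k * (2/d)^2 * C₀ k := by
              apply mul_le_mul _ (hC₀b k t ht) (norm_nonneg _)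
                (mul_nonneg (hMf0 k) (by positivity))
              apply mul_le_mul (hMfb k t ht) h6 (by positivity) (hMf0 k)
          _ = Mf k * (2/d)^2 * C₀ k := rfl
      · intro t ht x hx
        have hu : HasDerivAt (fun y : ℂ => κ k t - y) (-1) x := by
          simpa using (hasDerivAt_id x).const_sub (κ k t)
        have h2 := ((hu.inv (hne t ht x hx)).const_mul (f (κ k t))).mul_const (deriv (κ k) t)
        exact h2
    -- conclude by local equality
    have hev : h₁ =ᶠ[nhds w] h₂ :=
      Filter.eventuallyEq_of_mem (Metric.ball_mem_nhds w hd) heq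
    exact hd2.congr_of_eventuallyEq hev
  have hdall : Differentiable ℂ h₁ := by
    intro w
    by_cases hw : w ∈ Ω
    · exact hdΩ w hw
    · exact hdcompl w hw
  -- h₁ equals h₂ far away, with a decaying bound
  have hfar : ∀ w : ℂ, R < ‖w‖ → h₁ w = h₂ w ∧ ‖h₂ w‖ ≤ B / (‖w‖ - R) := by
    intro w hw
    have hoffw : ∀ k, ∀ t ∈ Set.uIcc (0:ℝ) 1, κ k t ≠ w := by
      intro k t ht heq
      have := hRk k t ht
      rw [heq] at this
      linarith
    have hWw : W w = 0 := by
      rw [hWdef]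
      apply Finset.sum_eq_zero
      intro k _
      exact windingNumber_eq_zero_of_large (hκC k) (hκl k) (hRk k) hw
    constructor
    · rw [hsplit w hoffw, hWw]
      simp
    · rw [h₂def]
      refine le_trans (norm_sum_le _ _) ?_
      rw [hBdef, Finset.sum_div]
      apply Finset.sum_le_sum
      intro k _
      rw [loopIntegral]
      apply norm_loopIntegral_le
      intro t ht
      have hlow : ‖w‖ - R ≤ ‖κ k t - w‖ := by
        have h1 := hRk k t ht
        have h2 : ‖w‖ - ‖κ k t‖ ≤ ‖κ k t - w‖ := by
          rw [norm_sub_rev]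
          linarith [norm_sub_norm_le w (κ k t)]
        linarith
      have hpos : 0 < ‖w‖ - R := by linarith
      rw [norm_mul, norm_mul, norm_inv]
      calc ‖f (κ k t)‖ * ‖κ k t - w‖⁻¹ * ‖deriv (κ k) t‖
          ≤ Mf k * (‖w‖ - R)⁻¹ * C₀ k := by
            apply mul_le_mul _ (hC₀b k t ht) (norm_nonneg _)
              (mul_nonneg (hMf0 k) (inv_nonneg.mpr hpos.le))
            exact mul_le_mul (hMfb k t ht) (inv_anti₀ hpos hlow)
              (by positivity) (hMf0 k)
        _ = Mf k * C₀ k / (‖w‖ - R) := by ring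
  -- boundedness and Liouville
  obtain ⟨Mb, hMb⟩ := (isCompact_closedBall (0:ℂ) (R+1)).exists_bound_of_continuousOn
    hdall.continuous.continuousOn
  have hbd : ∀ w, ‖h₁ w‖ ≤ max Mb B := by
    intro w
    by_cases hw : ‖w‖ ≤ R+1
    · exact le_trans (hMb w (mem_closedBall_zero_iff.mpr hw)) (le_max_left _ _)
    · push_neg at hw
      have hRw : R < ‖w‖ := by linarith
      obtain ⟨heq, hle⟩ := hfar w hRw
      rw [heq]
      refine le_trans hle (le_trans ?_ (le_max_right _ _))
      rw [div_le_iff₀ (by linarith)]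
      nlinarith
  have hrange : Bornology.IsBounded (Set.range h₁) := by
    rw [Metric.isBounded_iff_subset_closedBall 0]
    exact ⟨max Mb B, by rintro _ ⟨w, rfl⟩; exact mem_closedBall_zero_iff.mpr (hbd w)⟩
  have hconst := hdall.apply_eq_apply_of_bounded hrange
  -- h₁ vanishes
  have hzero : h₁ w₀ = 0 := by
    have hsmall : ∀ ε : ℝ, 0 < ε → ‖h₁ w₀‖ ≤ ε := by
      intro ε hε
      set r : ℝ := max (R+1) (R + B/ε) with hrdef
      have hr1 : R + 1 ≤ r := le_max_left _ _
      have hr2 : R + B/ε ≤ r := le_max_right _ _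
      have hrnorm : ‖((r:ℝ) : ℂ)‖ = r := by
        rw [Complex.norm_real, Real.norm_eq_abs, abs_of_nonneg (by linarith)]
      have hRr : R < ‖((r:ℝ) : ℂ)‖ := by rw [hrnorm]; linarith
      obtain ⟨heq2, hle2⟩ := hfar ((r:ℝ) : ℂ) hRr
      rw [hconst w₀ ((r:ℝ) : ℂ), heq2]
      refine le_trans hle2 ?_
      rw [hrnorm, div_le_iff₀ (by linarith)]
      have : B/ε ≤ r - R := by linarith
      calc B = B/ε * ε := by field_simp
        _ ≤ (r - R) * ε := mul_le_mul_of_nonneg_right this hε.le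
        _ = ε * (r - R) := mul_comm _ _
    by_contra hne
    have hpos : 0 < ‖h₁ w₀‖ := norm_pos_iff.mpr hne
    have := hsmall (‖h₁ w₀‖/2) (by positivity)
    linarith
  -- conclude
  have hw₀off : ∀ k, ∀ t ∈ Set.uIcc (0:ℝ) 1, κ k t ≠ w₀ := fun k t _ => hoff k t
  have hfinal := hsplit w₀ hw₀off
  rw [hzero] at hfinal
  have h2w : h₂ w₀ = f w₀ * ((2 * Real.pi * Complex.I) * W w₀) := by
    linear_combination -hfinal
  have h2w' : ∑ k, loopIntegral (κ k) (fun ζ => f ζ * (ζ - w₀)⁻¹)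
      = f w₀ * ((2 * Real.pi * Complex.I) * (∑ k, windingNumber (κ k) w₀)) := by
    simpa [h₂def, hWdef] using h2w
  rw [h2w']
  ring

lemma hasDerivAt_inv_comp {κ : ℝ → ℂ} (hκ : ContDiff ℝ 1 κ) {t : ℝ} (h0 : κ t ≠ 0) :
    HasDerivAt (fun s => (κ s)⁻¹) (-(deriv κ t) * ((κ t)^2)⁻¹) t := by
  have h1 : HasDerivAt κ (deriv κ t) t := ((hκ.differentiable one_ne_zero) t).hasDerivAt
  have h2 := HasDerivAt.scomp (x := t) (hasDerivAt_inv h0) h1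
  have h3 : HasDerivAt (fun s => (κ s)⁻¹) (deriv κ t • -(κ t ^ 2)⁻¹) t := h2
  convert h3 using 1
  simp only [smul_eq_mul]
  ring

lemma deriv_inv_loop {κ : ℝ → ℂ} (hκ : ContDiff ℝ 1 κ) {z : ℂ} {t : ℝ} (h0 : κ t ≠ 0) :
    deriv (fun s => z * (κ s)⁻¹) t = z * (-(deriv κ t) * ((κ t)^2)⁻¹) :=
  ((hasDerivAt_inv_comp hκ h0).const_mul z).deriv

lemma windingNumber_inv_zero {κ : ℝ → ℂ} (hκ : ContDiff ℝ 1 κ)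
    (hκ0 : ∀ t : ℝ, κ t ≠ 0) {z : ℂ} (hz : z ≠ 0) :
    windingNumber (fun s => z * (κ s)⁻¹) 0 = - windingNumber κ 0 := by
  rw [windingNumber, windingNumber, loopIntegral, loopIntegral, ← mul_neg,
    ← intervalIntegral.integral_neg]
  congr 1
  apply intervalIntegral.integral_congr
  intro t ht
  show (z * (κ t)⁻¹ - 0)⁻¹ * deriv (fun s => z * (κ s)⁻¹) t = -((κ t - 0)⁻¹ * deriv κ t)
  rw [deriv_inv_loop hκ (hκ0 t), sub_zero, sub_zero]
  field_simp [hκ0 t]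

lemma windingNumber_inv_loop {κ : ℝ → ℂ} (hκ : ContDiff ℝ 1 κ)
    (hκ0 : ∀ t : ℝ, κ t ≠ 0) {z p : ℂ} (hz : z ≠ 0) (hp : p ≠ 0)
    (havoid : ∀ t : ℝ, κ t ≠ z * p⁻¹) :
    windingNumber (fun s => z * (κ s)⁻¹) p =
      windingNumber κ (z * p⁻¹) - windingNumber κ 0 := by
  have h2 : ∀ t : ℝ, κ t - z * p⁻¹ ≠ 0 := fun t => sub_ne_zero.mpr (havoid t)
  have h1 : ∀ t : ℝ, z * (κ t)⁻¹ - p ≠ 0 := by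
    intro t h
    apply havoid t
    have h' : z * (κ t)⁻¹ = p := sub_eq_zero.mp h
    have hz' : z = p * κ t := by
      field_simp [hκ0 t] at h'
      linear_combination h'
    field_simp [hp]
    linear_combination -hz'
  have hi1 : IntervalIntegrable (fun t => (κ t - z * p⁻¹)⁻¹ * deriv κ t)
      MeasureTheory.volume 0 1 :=
    (contOn_kernel hκ (g := fun ζ => (ζ - z * p⁻¹)⁻¹) fun t ht =>
      ContinuousAt.inv₀ ((continuous_id.sub continuous_const).continuousAt)
        (h2 t)).intervalIntegrable
  have hi2 : IntervalIntegrable (fun t => (κ t - 0)⁻¹ * deriv κ t)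
      MeasureTheory.volume 0 1 :=
    (contOn_kernel hκ (g := fun ζ => (ζ - 0)⁻¹) fun t ht => by
      exact ContinuousAt.inv₀
        ((continuous_id.sub (continuous_const (y := (0:ℂ)))).continuousAt) (by
          simpa [sub_zero] using hκ0 t)).intervalIntegrable
  rw [windingNumber, windingNumber, windingNumber, loopIntegral, loopIntegral, loopIntegral,
    ← mul_sub]
  congr 1
  rw [← intervalIntegral.integral_sub hi1 hi2]
  apply intervalIntegral.integral_congr
  intro t ht
  show (z * (κ t)⁻¹ - p)⁻¹ * deriv (fun s => z * (κ s)⁻¹) t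
      = (κ t - z * p⁻¹)⁻¹ * deriv κ t - (κ t - 0)⁻¹ * deriv κ t
  have ha := hκ0 t
  have hz2 : z - p * κ t ≠ 0 := by
    intro hcon
    apply h1 t
    have hfac : z * (κ t)⁻¹ - p = (z - p * κ t) * (κ t)⁻¹ := by
      field_simp
    rw [hfac, hcon, zero_mul]
  have hz3 : p * κ t - z ≠ 0 := by
    intro hcon
    apply hz2
    linear_combination -hcon
  have e1 : (z * (κ t)⁻¹ - p)⁻¹ = κ t * (z - p * κ t)⁻¹ := by
    have hfac : z * (κ t)⁻¹ - p = (z - p * κ t) * (κ t)⁻¹ := by field_simp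
    rw [hfac, mul_inv, inv_inv, mul_comm]
  have e2 : (κ t - z * p⁻¹)⁻¹ = p * (p * κ t - z)⁻¹ := by
    have hfac : κ t - z * p⁻¹ = (p * κ t - z) * p⁻¹ := by field_simp
    rw [hfac, mul_inv, inv_inv, mul_comm]
  rw [deriv_inv_loop hκ (hκ0 t), sub_zero, e1, e2]
  field_simp [ha, hz2, hz3]
  have hA : z - κ t * p ≠ 0 := by rw [mul_comm]; exact hz2
  rw [show κ t * p - z = -(z - κ t * p) by ring, div_neg]
  field_simp
  ring

lemma T_closed {S₂ : Set ℂ} (hS₂c : IsCompact S₂) {z : ℂ} (hz : z ≠ 0) :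
    IsClosed ((fun s => z * s⁻¹) '' (S₂ \ {0})) := by
  apply IsSeqClosed.isClosed
  intro u x hu hux
  choose s hsm heq using hu
  have hs0 : ∀ n, s n ≠ 0 := fun n h0 => (hsm n).2 (by simp [h0])
  have hsS : ∀ n, s n ∈ S₂ := fun n => (hsm n).1
  obtain ⟨B, hB⟩ := hS₂c.isBounded.subset_closedBall 0
  have hBn : ∀ n, ‖s n‖ ≤ B := fun n => mem_closedBall_zero_iff.mp (hB (hsS n))
  have hB0 : 0 < B := lt_of_lt_of_le (norm_pos_iff.mpr (hs0 0)) (hBn 0)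
  have hun0 : ∀ n, u n ≠ 0 := fun n => (heq n) ▸ mul_ne_zero hz (inv_ne_zero (hs0 n))
  have hlow : ∀ n, ‖z‖/B ≤ ‖u n‖ := by
    intro n
    rw [← heq n, norm_mul, norm_inv]
    have h1 : 0 < ‖s n‖ := norm_pos_iff.mpr (hs0 n)
    rw [div_le_iff₀ hB0, mul_assoc]
    have h2 : B⁻¹ * B ≤ ‖s n‖⁻¹ * B := by
      apply mul_le_mul_of_nonneg_right _ hB0.le
      exact inv_anti₀ h1 (hBn n)
    calc ‖z‖ = ‖z‖ * (B⁻¹ * B) := by field_simp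
      _ ≤ ‖z‖ * (‖s n‖⁻¹ * B) := mul_le_mul_of_nonneg_left h2 (norm_nonneg _)
  have hx0 : x ≠ 0 := by
    intro h0
    have hnorm : Filter.Tendsto (fun n => ‖u n‖) Filter.atTop (nhds 0) := by
      simpa [h0] using hux.norm
    have hpos : (0:ℝ) < ‖z‖/B := by
      apply div_pos (norm_pos_iff.mpr hz) hB0
    obtain ⟨n, hn⟩ := (hnorm.eventually (eventually_lt_nhds hpos)).exists
    linarith [hlow n]
  have hsn : ∀ n, s n = z * (u n)⁻¹ := by
    intro n
    have h := heq n
    have h' : z = u n * s n := by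
      field_simp [hs0 n] at h
      linear_combination h
    field_simp [hun0 n]
    linear_combination -h'
  have hst : Filter.Tendsto s Filter.atTop (nhds (z * x⁻¹)) := by
    rw [funext hsn]
    exact (hux.inv₀ hx0).const_mul z
  have hsS' : z * x⁻¹ ∈ S₂ :=
    hS₂c.isClosed.mem_of_tendsto hst (Filter.Eventually.of_forall hsS)
  refine ⟨z * x⁻¹, ⟨hsS', ?_⟩, ?_⟩
  · simp [hz, hx0]
  · show z * (z * x⁻¹)⁻¹ = x
    rw [mul_inv, inv_inv, ← mul_assoc, mul_inv_cancel₀ hz, one_mul]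

end StarAux

set_option maxHeartbeats 2000000 in
/-- Non-commutativity defect of the generalized Hadamard product. Let `S₁, S₂` be
star-eligible closed subsets of `ℙ¹` with `0, ∞ ∉ S₁` and `0 ∈ S₂`, `∞ ∉ S₂` (so `S₁`, `S₂`
are compact subsets of `ℂ`, `0 ∉ S₁`, `0 ∈ S₂`). Let `f₁ ∈ Hol(ℙ¹ \ S₁)` and
`f₂ ∈ Hol(ℙ¹ \ S₂)`, holomorphy at `∞` being expressed via `fᵢ w = gᵢ (1/w)` for `|w|` large
with `gᵢ` holomorphic near `0`, and `f₂(∞) = g₂ 0`. For `z ∈ ℂ* \ S₁·S₂`, let `γ` (a finite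
family of `C¹` loops) be a generalized Hadamard cycle for `S₁` in
`ℙ¹ \ (z·S₂⁻¹ ∪ {0})` (winding number `0` on `z·S₂⁻¹ ∪ {0}` and `−1` on `S₁`), and let `η`
be a generalized Hadamard cycle for `S₂` in `ℙ¹ \ (z·S₁⁻¹ ∪ {∞})` (winding number `0` on
`z·S₁⁻¹` and `−1` on `S₂`). Then
`(f₁ ⋆ f₂)(z) − (f₂ ⋆ f₁)(z) = f₁(0)·f₂(∞)`. -/
theorem stmt_19 (S₁ S₂ : Set ℂ)
    (hS₁c : IsCompact S₁) (hS₂c : IsCompact S₂)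
    (hS₁0 : (0 : ℂ) ∉ S₁) (hS₂0 : (0 : ℂ) ∈ S₂)
    (f₁ f₂ g₁ g₂ : ℂ → ℂ) (ε₁ ε₂ : ℝ) (hε₁ : 0 < ε₁) (hε₂ : 0 < ε₂)
    (hf₁ : DifferentiableOn ℂ f₁ S₁ᶜ)
    (hf₂ : DifferentiableOn ℂ f₂ S₂ᶜ)
    (hg₁ : DifferentiableOn ℂ g₁ (Metric.ball (0 : ℂ) ε₁))
    (hg₂ : DifferentiableOn ℂ g₂ (Metric.ball (0 : ℂ) ε₂))
    (hf₁inf : ∀ w : ℂ, 1 / ε₁ < ‖w‖ → f₁ w = g₁ w⁻¹)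
    (hf₂inf : ∀ w : ℂ, 1 / ε₂ < ‖w‖ → f₂ w = g₂ w⁻¹)
    (z : ℂ) (hz : z ≠ 0) (hzS : z ∉ S₁ * S₂)
    -- the generalized Hadamard cycle `γ` for `S₁` in `ℙ¹ \ (z·S₂⁻¹ ∪ {0})`
    (m : ℕ) (γ : Fin m → ℝ → ℂ)
    (hγC : ∀ i, ContDiff ℝ 1 (γ i)) (hγloop : ∀ i, γ i 0 = γ i 1)
    (hγrange : ∀ i, ∀ t : ℝ,
      γ i t ∉ S₁ ∧ γ i t ≠ 0 ∧ ∀ s ∈ S₂, s ≠ 0 → γ i t ≠ z * s⁻¹)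
    (hγS₁ : ∀ w ∈ S₁, (∑ i, windingNumber (γ i) w) = -1)
    (hγS₂ : ∀ s ∈ S₂, s ≠ 0 → (∑ i, windingNumber (γ i) (z * s⁻¹)) = 0)
    (hγ0 : (∑ i, windingNumber (γ i) 0) = 0)
    -- the generalized Hadamard cycle `η` for `S₂` in `ℙ¹ \ (z·S₁⁻¹ ∪ {∞})`
    (m' : ℕ) (η : Fin m' → ℝ → ℂ)
    (hηC : ∀ j, ContDiff ℝ 1 (η j)) (hηloop : ∀ j, η j 0 = η j 1)
    (hηrange : ∀ j, ∀ t : ℝ,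
      η j t ∉ S₂ ∧ η j t ≠ 0 ∧ ∀ s ∈ S₁, η j t ≠ z * s⁻¹)
    (hηS₂ : ∀ w ∈ S₂, (∑ j, windingNumber (η j) w) = -1)
    (hηS₁ : ∀ s ∈ S₁, (∑ j, windingNumber (η j) (z * s⁻¹)) = 0) :
    (2 * Real.pi * Complex.I)⁻¹ *
        (∑ i, loopIntegral (γ i) fun ζ => f₁ ζ * f₂ (z / ζ) / ζ) -
      (2 * Real.pi * Complex.I)⁻¹ *
        (∑ j, loopIntegral (η j) fun ζ => f₂ ζ * f₁ (z / ζ) / ζ) =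
      f₁ 0 * g₂ 0 := by
  classical
  have hzabs : 0 < ‖z‖ := norm_pos_iff.mpr hz
  set T : Set ℂ := (fun s => z * s⁻¹) '' (S₂ \ {0}) with hTdef
  have hTclosed : IsClosed T := StarAux.T_closed hS₂c hz
  set Ω : Set ℂ := (S₁ ∪ T)ᶜ with hΩdef
  have hΩopen : IsOpen Ω := (hS₁c.isClosed.union hTclosed).isOpen_compl
  have h0T : (0:ℂ) ∉ T := by
    rintro ⟨s, ⟨hs, hs0⟩, heq⟩
    have hs0' : s ≠ 0 := fun h => hs0 (by simp [h])
    exact mul_ne_zero hz (inv_ne_zero hs0') heq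
  have h0Ω : (0:ℂ) ∈ Ω := by
    simp only [hΩdef, Set.mem_compl_iff, Set.mem_union, not_or]
    exact ⟨hS₁0, h0T⟩
  -- the function Q : the "numerator" of the integrand, holomorphic at 0
  set Q : ℂ → ℂ := fun ζ => if ‖ζ‖ < ε₂ * ‖z‖ then f₁ ζ * g₂ (ζ / z)
    else f₁ ζ * f₂ (z / ζ) with hQdef
  have hQeq : ∀ ζ : ℂ, ζ ≠ 0 → Q ζ = f₁ ζ * f₂ (z / ζ) := by
    intro ζ hζ
    simp only [hQdef]
    by_cases hlt : ‖ζ‖ < ε₂ * ‖z‖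
    · rw [if_pos hlt]
      have hζ0 : 0 < ‖ζ‖ := norm_pos_iff.mpr hζ
      have habs : 1 / ε₂ < ‖z / ζ‖ := by
        rw [norm_div, div_lt_div_iff₀ hε₂ hζ0, one_mul, mul_comm ‖z‖ ε₂]
        exact hlt
      rw [hf₂inf _ habs, inv_div]
    · rw [if_neg hlt]
  have hQ0 : Q 0 = f₁ 0 * g₂ 0 := by
    have hc : ‖(0:ℂ)‖ < ε₂ * ‖z‖ := by
      simpa using mul_pos hε₂ hzabs
    simp only [hQdef]
    rw [if_pos hc, zero_div]
  have hQdiff : DifferentiableOn ℂ Q Ω := by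
    intro ζ₀ hζ₀
    apply DifferentiableAt.differentiableWithinAt
    have hmem' : ζ₀ ∉ S₁ ∧ ζ₀ ∉ T := by
      constructor
      · intro h; exact hζ₀ (Or.inl h)
      · intro h; exact hζ₀ (Or.inr h)
    have hf₁at : DifferentiableAt ℂ f₁ ζ₀ :=
      hf₁.differentiableAt (hS₁c.isClosed.isOpen_compl.mem_nhds hmem'.1)
    by_cases hlt : ‖ζ₀‖ < ε₂ * ‖z‖
    · have hopen : IsOpen {w : ℂ | ‖w‖ < ε₂ * ‖z‖} :=
        isOpen_lt continuous_norm continuous_const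
      have hev : Q =ᶠ[nhds ζ₀] fun w => f₁ w * g₂ (w / z) := by
        filter_upwards [hopen.mem_nhds hlt] with w hw
        simp only [hQdef]
        rw [if_pos hw]
      rw [hev.differentiableAt_iff]
      apply hf₁at.mul
      have hball : ζ₀ / z ∈ Metric.ball (0:ℂ) ε₂ := by
        rw [Metric.mem_ball, dist_zero_right, norm_div,
          div_lt_iff₀ hzabs, mul_comm ε₂ ‖z‖] at *
        exact hlt
      have hg₂at : DifferentiableAt ℂ g₂ (ζ₀ / z) :=
        hg₂.differentiableAt (Metric.isOpen_ball.mem_nhds hball)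
      exact hg₂at.comp ζ₀ (differentiableAt_id.div_const z)
    · have hζ0 : ζ₀ ≠ 0 := by
        intro h
        apply hlt
        rw [h]
        simpa using mul_pos hε₂ hzabs
      have hev : Q =ᶠ[nhds ζ₀] fun w => f₁ w * f₂ (z / w) := by
        filter_upwards [isOpen_compl_singleton.mem_nhds
          (Set.mem_compl_singleton_iff.mpr hζ0)] with w hw
        exact hQeq w hw
      rw [hev.differentiableAt_iff]
      apply hf₁at.mul
      have hzζ : z / ζ₀ ∉ S₂ := by
        intro hmem2
        apply hmem'.2
        refine ⟨z / ζ₀, ⟨hmem2, ?_⟩, ?_⟩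
        · simp only [Set.mem_singleton_iff]
          exact div_ne_zero hz hζ0
        · show z * (z / ζ₀)⁻¹ = ζ₀
          rw [div_eq_mul_inv, mul_inv, inv_inv, ← mul_assoc, mul_inv_cancel₀ hz, one_mul]
      have hf₂at : DifferentiableAt ℂ f₂ (z / ζ₀) :=
        hf₂.differentiableAt (hS₂c.isClosed.isOpen_compl.mem_nhds hzζ)
      have hdiv : DifferentiableAt ℂ (fun w : ℂ => z / w) ζ₀ := by
        simp only [div_eq_mul_inv]
        exact (differentiableAt_id.inv hζ0).const_mul z
      exact hf₂at.comp ζ₀ hdiv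
  -- the inverted loops
  have hη0 : ∀ j (t : ℝ), η j t ≠ 0 := fun j t => (hηrange j t).2.1
  set δf : Fin m' → ℝ → ℂ := fun j t => z * (η j t)⁻¹ with hδfdef
  have hδC : ∀ j, ContDiff ℝ 1 (δf j) := fun j =>
    contDiff_const.mul ((hηC j).inv (hη0 j))
  have hδl : ∀ j, δf j 0 = δf j 1 := fun j => by simp only [hδfdef, hηloop j]
  have hδ0 : ∀ j (t : ℝ), δf j t ≠ 0 := fun j t => mul_ne_zero hz (inv_ne_zero (hη0 j t))
  -- the combined family
  set κf : Fin (m + m') → ℝ → ℂ := Fin.append γ δf with hκfdef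
  have hκfC : ∀ k, ContDiff ℝ 1 (κf k) := by
    intro k
    refine Fin.addCases (fun i => ?_) (fun j => ?_) k
    · rw [hκfdef, Fin.append_left]; exact hγC i
    · rw [hκfdef, Fin.append_right]; exact hδC j
  have hκfl : ∀ k, κf k 0 = κf k 1 := by
    intro k
    refine Fin.addCases (fun i => ?_) (fun j => ?_) k
    · rw [hκfdef, Fin.append_left]; exact hγloop i
    · rw [hκfdef, Fin.append_right]; exact hδl j
  have hγΩ : ∀ i (t : ℝ), γ i t ∈ Ω := by
    intro i t
    simp only [hΩdef, Set.mem_compl_iff, Set.mem_union, not_or]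
    refine ⟨(hγrange i t).1, ?_⟩
    rintro ⟨s, ⟨hs, hs0⟩, heq⟩
    have hs0' : s ≠ 0 := fun h => hs0 (by simp [h])
    exact (hγrange i t).2.2 s hs hs0' heq.symm
  have hδΩ : ∀ j (t : ℝ), δf j t ∈ Ω := by
    intro j t
    simp only [hΩdef, Set.mem_compl_iff, Set.mem_union, not_or]
    constructor
    · intro hmem1
      have hw0 : z * (η j t)⁻¹ ≠ 0 := hδ0 j t
      apply (hηrange j t).2.2 (z * (η j t)⁻¹) hmem1
      rw [mul_inv, inv_inv, ← mul_assoc, mul_inv_cancel₀ hz, one_mul]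
    · rintro ⟨s, ⟨hs, hs0⟩, heq⟩
      have hs0' : s ≠ 0 := fun h => hs0 (by simp [h])
      have : s⁻¹ = (η j t)⁻¹ := mul_left_cancel₀ hz heq
      have hse : s = η j t := by
        rw [← inv_inv s, this, inv_inv]
      exact (hηrange j t).1 (hse ▸ hs)
  have hmemΩ : ∀ k (t : ℝ), κf k t ∈ Ω := by
    intro k
    refine Fin.addCases (fun i => ?_) (fun j => ?_) k
    · rw [hκfdef, Fin.append_left]; exact hγΩ i
    · rw [hκfdef, Fin.append_right]; exact hδΩ j
  have hoff0 : ∀ k (t : ℝ), κf k t ≠ 0 := by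
    intro k
    refine Fin.addCases (fun i => ?_) (fun j => ?_) k
    · rw [hκfdef, Fin.append_left]; exact fun t => (hγrange i t).2.1
    · rw [hκfdef, Fin.append_right]; exact hδ0 j
  -- winding numbers vanish on the complement of Ω
  have hsumηzero : (∑ j, windingNumber (η j) 0) = -1 := hηS₂ 0 hS₂0
  have hWcompl : ∀ p, p ∉ Ω → (∑ k, windingNumber (κf k) p) = 0 := by
    intro p hp
    have hp' : p ∈ S₁ ∪ T := by
      by_contra hcon
      exact hp hcon
    rw [Fin.sum_univ_add (f := fun k => windingNumber (κf k) p)]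
    simp only [hκfdef, Fin.append_left, Fin.append_right]
    rcases hp' with hp1 | hp2
    · have hp0 : p ≠ 0 := fun h => hS₁0 (h ▸ hp1)
      have hδw : ∀ j, windingNumber (δf j) p
          = windingNumber (η j) (z * p⁻¹) - windingNumber (η j) 0 := fun j =>
        StarAux.windingNumber_inv_loop (hηC j) (hη0 j) hz hp0
          (fun t => (hηrange j t).2.2 p hp1)
      rw [hγS₁ p hp1, Finset.sum_congr rfl fun j _ => hδw j, Finset.sum_sub_distrib,
        hηS₁ p hp1, hsumηzero]
      ring
    · obtain ⟨s, ⟨hs, hs0m⟩, rfl⟩ := hp2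
      have hs0 : s ≠ 0 := fun h => hs0m (by simp [h])
      have hp0 : z * s⁻¹ ≠ 0 := mul_ne_zero hz (inv_ne_zero hs0)
      have hzps : z * (z * s⁻¹)⁻¹ = s := by
        rw [mul_inv, inv_inv, ← mul_assoc, mul_inv_cancel₀ hz, one_mul]
      have hδw : ∀ j, windingNumber (δf j) (z * s⁻¹)
          = windingNumber (η j) s - windingNumber (η j) 0 := by
        intro j
        have h := StarAux.windingNumber_inv_loop (hηC j) (hη0 j) hz hp0
          (fun t => by rw [hzps]; exact fun h' => (hηrange j t).1 (h' ▸ hs))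
        rwa [hzps] at h
      rw [hγS₂ s hs hs0, Finset.sum_congr rfl fun j _ => hδw j, Finset.sum_sub_distrib,
        hηS₂ s hs, hsumηzero]
      ring
  -- the total winding number at 0 is 1
  have hW0 : (∑ k, windingNumber (κf k) 0) = 1 := by
    rw [Fin.sum_univ_add (f := fun k => windingNumber (κf k) 0)]
    simp only [hκfdef, Fin.append_left, Fin.append_right]
    have hδw : ∀ j, windingNumber (δf j) 0 = - windingNumber (η j) 0 := fun j =>
      StarAux.windingNumber_inv_zero (hηC j) (hη0 j) hz
    rw [hγ0, Finset.sum_congr rfl fun j _ => hδw j, Finset.sum_neg_distrib, hsumηzero]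
    ring
  -- apply the global Cauchy integral formula
  have hdix := StarAux.dixon hΩopen hQdiff hκfC hκfl hmemΩ hWcompl h0Ω hoff0
  -- rewrite the γ-integrals
  have hγconv : ∀ i, loopIntegral (γ i) (fun ζ => f₁ ζ * f₂ (z / ζ) / ζ)
      = loopIntegral (γ i) (fun ζ => Q ζ * (ζ - 0)⁻¹) := by
    intro i
    rw [loopIntegral, loopIntegral]
    apply intervalIntegral.integral_congr
    intro t ht
    have h0 : γ i t ≠ 0 := (hγrange i t).2.1
    show f₁ (γ i t) * f₂ (z / γ i t) / γ i t * deriv (γ i) t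
        = Q (γ i t) * (γ i t - 0)⁻¹ * deriv (γ i) t
    rw [hQeq _ h0, sub_zero, div_eq_mul_inv]
  -- rewrite the η-integrals via the substitution ζ ↦ z/ζ
  have hsubst : ∀ j, loopIntegral (δf j) (fun ζ => Q ζ * (ζ - 0)⁻¹)
      = - loopIntegral (η j) (fun ζ => f₂ ζ * f₁ (z / ζ) / ζ) := by
    intro j
    rw [loopIntegral, loopIntegral, ← intervalIntegral.integral_neg]
    apply intervalIntegral.integral_congr
    intro t ht
    have hη0' := hη0 j t
    have hδ0' : z * (η j t)⁻¹ ≠ 0 := hδ0 j t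
    show Q (δf j t) * (δf j t - 0)⁻¹ * deriv (δf j) t
        = -(f₂ (η j t) * f₁ (z / η j t) / η j t * deriv (η j) t)
    have hδft : δf j t = z * (η j t)⁻¹ := rfl
    have hd : deriv (δf j) t = z * (-(deriv (η j) t) * ((η j t)^2)⁻¹) :=
      StarAux.deriv_inv_loop (hηC j) hη0'
    rw [hδft, hd, hQeq _ hδ0', sub_zero]
    have hzη : z / (z * (η j t)⁻¹) = η j t := by
      rw [div_eq_mul_inv, mul_inv, inv_inv, ← mul_assoc, mul_inv_cancel₀ hz, one_mul]
    rw [hzη]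
    rw [div_eq_mul_inv z (η j t)]
    field_simp
  -- assemble
  have hsum : (∑ k, loopIntegral (κf k) (fun ζ => Q ζ * (ζ - 0)⁻¹))
      = (∑ i, loopIntegral (γ i) fun ζ => f₁ ζ * f₂ (z / ζ) / ζ)
        - (∑ j, loopIntegral (η j) fun ζ => f₂ ζ * f₁ (z / ζ) / ζ) := by
    rw [Fin.sum_univ_add (f := fun k => loopIntegral (κf k) (fun ζ => Q ζ * (ζ - 0)⁻¹))]
    simp only [hκfdef, Fin.append_left, Fin.append_right]
    rw [Finset.sum_congr rfl fun i _ => (hγconv i).symm,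
      Finset.sum_congr rfl fun j _ => hsubst j, Finset.sum_neg_distrib]
    ring
  rw [← mul_sub, ← hsum, hdix, hW0, hQ0, mul_one, ← mul_assoc,
    inv_mul_cancel₀ StarAux.c2pi_ne, one_mul]
end
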